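/- arXiv:2312.07727 — 6 statements merged into one kernel-verified Lean document; each statement's English description precedes it below -/
import Mathlib

section
/- Every minimizer f̂ ∈ ℋ of ℓ admits a finite-dimensional representation f̂ = Σ_{k=1}^m d_k φ_k + Σ_{j=1}^M c_j R(t_j, ·) for some real coefficients d_1, …, d_m and c_1, …, c_M. -/
open scoped RealInnerProductSpace

noncomputable section

/-- **representer theorem.** In a real RKHS `ℋ` of functions on a set `𝒯`
with reproducing kernel `K`, let `ℋ₀` be a finite-dimensional subspace with basis
`φ_1, …, φ_m`, let `P₁` be the orthogonal projection onto `ℋ₁ = ℋ₀^⊥`, set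
`J(f,f) = ‖P₁ f‖²` and `R(s, ·) = P₁ K_s`. Then every minimizer `f̂` of
`ℓ(f) = (1/(2M)) Σ_j (y_j − f(t_j))² + (λ/2) J(f,f)` has the form
`f̂ = Σ_{k=1}^m d_k φ_k + Σ_{j=1}^M c_j R(t_j, ·)`. -/
theorem representer_theorem
    {H : Type*} [NormedAddCommGroup H] [InnerProductSpace ℝ H] [CompleteSpace H]
    {T : Type*} (ev : H → T → ℝ) (K : T → H)
    (hK : ∀ (t : T) (f : H), ⟪K t, f⟫ = ev f t)
    (H₀ : Submodule ℝ H) [FiniteDimensional ℝ H₀]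
    (mdim : ℕ) (φ : Fin mdim → H)
    (hφmem : ∀ k, φ k ∈ H₀) (hφindep : LinearIndependent ℝ φ)
    (hφspan : Submodule.span ℝ (Set.range φ) = H₀)
    (lam : ℝ) (hlam : 0 < lam)
    (M : ℕ) (t : Fin M → T) (y : Fin M → ℝ)
    (ℓ : H → ℝ)
    (hℓ : ∀ f : H, ℓ f = (1 / (2 * (M : ℝ))) * ∑ j, (y j - ev f (t j))^2
        + (lam / 2) * ‖((Submodule.orthogonalProjectionOnto H₀ᗮ f : H₀ᗮ) : H)‖^2)
    (fhat : H) (hmin : ∀ g : H, ℓ fhat ≤ ℓ g) :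
    ∃ (d : Fin mdim → ℝ) (c : Fin M → ℝ),
      fhat = (∑ k, d k • φ k)
        + ∑ j, c j • ((Submodule.orthogonalProjectionOnto H₀ᗮ (K (t j)) : H₀ᗮ) : H) := by
  classical
  set R : Fin M → H := fun j => ((Submodule.orthogonalProjectionOnto H₀ᗮ (K (t j)) : H₀ᗮ) : H) with hRdef
  set S : Submodule ℝ H := Submodule.span ℝ (Set.range R) with hSdef
  haveI : FiniteDimensional ℝ S := FiniteDimensional.span_of_finite ℝ (Set.finite_range R)
  set V : Submodule ℝ H := H₀ ⊔ S with hVdef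
  set v : H := (Submodule.orthogonalProjectionOnto V fhat : H) with hvdef
  set w : H := fhat - v with hwdef
  have hfvw : fhat = v + w := by simp [hwdef]
  have hwV : w ∈ Vᗮ := Submodule.sub_starProjection_mem_orthogonal fhat
  have hwV' : ∀ u ∈ V, ⟪u, w⟫ = 0 := fun u hu => hwV u hu
  have hvV : v ∈ V := (Submodule.orthogonalProjectionOnto V fhat).2
  -- each K (t j) lies in V
  have hsub : ∀ x : H, x - ((Submodule.orthogonalProjectionOnto H₀ᗮ x : H₀ᗮ) : H) ∈ H₀ := by
    intro x
    have := Submodule.sub_starProjection_mem_orthogonal (K := H₀ᗮ) x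
    rwa [Submodule.orthogonal_orthogonal] at this
  have hKmem : ∀ j, K (t j) ∈ V := by
    intro j
    have h1 : K (t j) - R j ∈ V := Submodule.mem_sup_left (hsub (K (t j)))
    have h2 : R j ∈ V := Submodule.mem_sup_right (Submodule.subset_span ⟨j, rfl⟩)
    simpa using V.add_mem h1 h2
  -- data terms agree
  have hev : ∀ j, ev fhat (t j) = ev v (t j) := by
    intro j
    rw [← hK, ← hK, hfvw, inner_add_right, hwV' _ (hKmem j), add_zero]
  -- w belongs to H₀ᗮ
  have hwH₀ : w ∈ H₀ᗮ := by
    intro u hu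
    exact hwV u (Submodule.mem_sup_left hu)
  have hP₁w : ((Submodule.orthogonalProjectionOnto H₀ᗮ w : H₀ᗮ) : H) = w :=
    Submodule.starProjection_eq_self_iff.mpr hwH₀
  have hPvw : ⟪((Submodule.orthogonalProjectionOnto H₀ᗮ v : H₀ᗮ) : H), w⟫ = 0 := by
    have h1 : ⟪v, w⟫ = 0 := hwV' v hvV
    have h2 : ⟪v - ((Submodule.orthogonalProjectionOnto H₀ᗮ v : H₀ᗮ) : H), w⟫ = 0 :=
      hwV' _ (Submodule.mem_sup_left (hsub v))
    rw [inner_sub_left, h1] at h2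
    linarith
  have hsplit : ((Submodule.orthogonalProjectionOnto H₀ᗮ fhat : H₀ᗮ) : H)
      = ((Submodule.orthogonalProjectionOnto H₀ᗮ v : H₀ᗮ) : H) + w := by
    rw [hfvw, map_add, Submodule.coe_add, hP₁w]
  have hnorm : ‖((Submodule.orthogonalProjectionOnto H₀ᗮ fhat : H₀ᗮ) : H)‖^2
      = ‖((Submodule.orthogonalProjectionOnto H₀ᗮ v : H₀ᗮ) : H)‖^2 + ‖w‖^2 := by
    rw [hsplit, norm_add_sq_real, hPvw]
    ring
  -- minimality forces w = 0
  have hle := hmin v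
  rw [hℓ fhat, hℓ v] at hle
  have hdata : ∑ j, (y j - ev fhat (t j))^2 = ∑ j, (y j - ev v (t j))^2 :=
    Finset.sum_congr rfl fun j _ => by rw [hev]
  have hw2 : ‖w‖^2 ≤ 0 := by
    rw [hdata, hnorm] at hle
    nlinarith
  have hw0 : w = 0 := by
    have : ‖w‖ = 0 := by nlinarith [norm_nonneg w]
    simpa using this
  have hfV : fhat ∈ V := by
    rw [hfvw, hw0, add_zero]; exact hvV
  rcases Submodule.mem_sup.1 hfV with ⟨a, ha, b, hb, hab⟩
  rw [← hφspan] at ha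
  rcases (Submodule.mem_span_range_iff_exists_fun ℝ).1 ha with ⟨d, hd⟩
  rcases (Submodule.mem_span_range_iff_exists_fun ℝ).1 hb with ⟨c, hc⟩
  exact ⟨d, c, by rw [hd, hc, hab]⟩
end
end

section
/- There exists a constant C_K > 0, depending only on m, c₀ and C_h (and in particular not on t or λ), such that ‖K_t‖² ≤ C_K² h^{-1} for every t ∈ [0,1]. -/
open scoped RealInnerProductSpace
open MeasureTheory

noncomputable section

private lemma amgm_step {a q : ℝ} (ha : 1 ≤ a) (hq : 0 < q) :
    q * (a + 1) ^ (-(q + 1)) ≤ a ^ (-q) - (a + 1) ^ (-q) := by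
  have ha0 : (0:ℝ) < a := lt_of_lt_of_le one_pos ha
  have hb0 : (0:ℝ) < a + 1 := by linarith
  have hq1 : (0:ℝ) < q + 1 := by linarith
  have hr0 : (0:ℝ) ≤ a / (a + 1) := by positivity
  have hp2 : (0:ℝ) ≤ (a + 1 + q) / (a + 1) := by positivity
  have hw1 : (0:ℝ) ≤ q / (q + 1) := by positivity
  have hw2 : (0:ℝ) ≤ 1 / (q + 1) := by positivity
  have hsum : q / (q + 1) + 1 / (q + 1) = 1 := by field_simp
  have hgm := Real.geom_mean_le_arith_mean2_weighted hw1 hw2 hr0 hp2 hsum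
  have hrhs : q / (q+1) * (a / (a+1)) + 1 / (q+1) * ((a+1+q) / (a+1)) = 1 := by
    field_simp; ring
  rw [hrhs] at hgm
  have hXnn : (0:ℝ) ≤ (a/(a+1)) ^ (q/(q+1)) * ((a+1+q)/(a+1)) ^ (1/(q+1)) := by
    positivity
  have hpow : ((a/(a+1)) ^ (q/(q+1)) * ((a+1+q)/(a+1)) ^ (1/(q+1))) ^ (q+1) ≤ 1 :=
    Real.rpow_le_one hXnn hgm hq1.le
  have hexpand : ((a/(a+1)) ^ (q/(q+1)) * ((a+1+q)/(a+1)) ^ (1/(q+1))) ^ (q+1)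
      = (a/(a+1)) ^ q * ((a+1+q)/(a+1)) := by
    rw [Real.mul_rpow (Real.rpow_nonneg hr0 _) (Real.rpow_nonneg hp2 _),
      ← Real.rpow_mul hr0, ← Real.rpow_mul hp2,
      div_mul_cancel₀ q (ne_of_gt hq1), one_div_mul_cancel (ne_of_gt hq1),
      Real.rpow_one]
  rw [hexpand, Real.div_rpow ha0.le hb0.le] at hpow
  have hx0 : (0:ℝ) < a ^ q := Real.rpow_pos_of_pos ha0 _
  have hy0 : (0:ℝ) < (a+1) ^ q := Real.rpow_pos_of_pos hb0 _
  have key : a ^ q * (a + 1 + q) ≤ (a+1) ^ q * (a + 1) := by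
    rw [div_mul_div_comm, div_le_one (by positivity)] at hpow
    nlinarith [hpow]
  have hzx : a ^ (-q) = (a ^ q)⁻¹ := Real.rpow_neg ha0.le q
  have hzy : (a+1) ^ (-q) = ((a+1) ^ q)⁻¹ := Real.rpow_neg hb0.le q
  have hzz : (a+1) ^ (-(q+1)) = ((a+1) ^ q * (a+1))⁻¹ := by
    rw [Real.rpow_neg hb0.le, Real.rpow_add hb0, Real.rpow_one]
  rw [hzx, hzy, hzz, inv_sub_inv (ne_of_gt hx0) (ne_of_gt hy0), ← div_eq_mul_inv,
    div_le_div_iff₀ (by positivity) (by positivity)]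
  nlinarith [mul_nonneg hy0.le (sub_nonneg.mpr key)]

private lemma rpow_tail_bound {p : ℝ} (hp : 1 < p) (N : ℕ) (hN : 1 ≤ N) :
    ∑' k : ℕ, ((N : ℝ) + k + 1) ^ (-p) ≤ 1 / (p - 1) * (N : ℝ) ^ (-(p - 1)) := by
  have hq : (0:ℝ) < p - 1 := by linarith
  have hN1 : (1:ℝ) ≤ (N:ℝ) := by exact_mod_cast hN
  apply Real.tsum_le_of_sum_range_le (fun k => Real.rpow_nonneg (by positivity) _)
  intro n
  set g : ℕ → ℝ := fun j => ((N:ℝ) + j) ^ (-(p-1)) with hg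
  have key : ∀ k : ℕ, ((N:ℝ) + k + 1) ^ (-p) ≤ 1/(p-1) * (g k - g (k+1)) := by
    intro k
    have ha : (1:ℝ) ≤ (N:ℝ) + k := by
      have : (0:ℝ) ≤ (k:ℝ) := Nat.cast_nonneg k
      linarith
    have h := amgm_step ha hq
    rw [show (p - 1) + 1 = p by ring] at h
    have hgk : g k = ((N:ℝ) + k) ^ (-(p-1)) := rfl
    have hgk1 : g (k+1) = ((N:ℝ) + k + 1) ^ (-(p-1)) := by
      simp only [hg]
      push_cast
      ring_nf
    rw [hgk, hgk1, one_div_mul_eq_div, le_div_iff₀ hq]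
    nlinarith [h]
  calc ∑ k ∈ Finset.range n, ((N:ℝ) + k + 1) ^ (-p)
      ≤ ∑ k ∈ Finset.range n, 1/(p-1) * (g k - g (k+1)) :=
        Finset.sum_le_sum fun k _ => key k
    _ = 1/(p-1) * (g 0 - g n) := by
        rw [← Finset.mul_sum, Finset.sum_range_sub' g n]
    _ ≤ 1/(p-1) * (N:ℝ) ^ (-(p-1)) := by
        have h0 : g 0 = (N:ℝ) ^ (-(p-1)) := by simp [hg]
        have hn : 0 ≤ g n := Real.rpow_nonneg (by positivity) _
        rw [← h0]
        exact mul_le_mul_of_nonneg_left (by linarith) (by positivity)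

private lemma summable_shift {p : ℝ} (hp : 1 < p) :
    Summable (fun v : ℕ => ((v:ℝ) + 1) ^ (-p)) := by
  have h : Summable (fun n : ℕ => (n : ℝ) ^ (-p)) :=
    Real.summable_nat_rpow.mpr (by linarith)
  have h2 := (summable_nat_add_iff 1).mpr h
  refine h2.congr fun v => ?_
  push_cast
  rfl

/-- The RKHS framework of the paper: a real Hilbert space `H` of functions on `[0,1]`
(with evaluation map `ev`), whose inner product is `⟪f, g⟫ = V f g + lam * J f g` for
symmetric positive-semidefinite bilinear forms `V` and `J`, together with a simultaneously
orthogonal system `hvec` with eigenvalues `γ`, uniformly bounded by `Ch`, in which every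
element expands, a reproducing kernel `K`, and the operator `W = W_lam` determined by
`⟪W f, g⟫ = lam * J f g`. -/
structure RKHSContext (lam : ℝ) (H : Type*) [NormedAddCommGroup H] [InnerProductSpace ℝ H] where
  ev : H → ℝ → ℝ
  V : H →ₗ[ℝ] H →ₗ[ℝ] ℝ
  J : H →ₗ[ℝ] H →ₗ[ℝ] ℝ
  V_symm : ∀ f g : H, V f g = V g f
  J_symm : ∀ f g : H, J f g = J g f
  V_nonneg : ∀ f : H, 0 ≤ V f f
  J_nonneg : ∀ f : H, 0 ≤ J f f
  inner_eq : ∀ f g : H, ⟪f, g⟫ = V f g + lam * J f g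
  hvec : ℕ → H
  γ : ℕ → ℝ
  γ_pos : ∀ v, 0 < γ v
  Ch : ℝ
  hvec_bound : ∀ v : ℕ, ∀ t ∈ Set.Icc (0:ℝ) 1, |ev (hvec v) t| ≤ Ch
  V_orth : ∀ u v : ℕ, V (hvec u) (hvec v) = if u = v then 1 else 0
  J_orth : ∀ u v : ℕ, J (hvec u) (hvec v) = if u = v then γ u else 0
  expansion : ∀ g : H, HasSum (fun v => V g (hvec v) • hvec v) g
  K : ℝ → H
  reproducing : ∀ t ∈ Set.Icc (0:ℝ) 1, ∀ f : H, ⟪K t, f⟫ = ev f t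
  W : H →ₗ[ℝ] H
  W_spec : ∀ f g : H, ⟪W f, g⟫ = lam * J f g

set_option maxHeartbeats 1000000 in
/-- There exists a constant `C_K > 0`, depending only on `m`, `c₀` and
`C_h` (in particular not on `t` or `λ`), such that `‖K_t‖² ≤ C_K² h⁻¹` for every
`t ∈ [0,1]`, where `h = λ^{1/(2m)}` and `γ_v ≥ c₀ v^{2m}`. -/
theorem norm_kernel_sq_le (m c₀ Ch : ℝ) (hm : 1/2 < m) (hc₀ : 0 < c₀) :
    ∃ CK : ℝ, 0 < CK ∧
      ∀ (lam : ℝ), 0 < lam →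
        ∀ (H : Type) [NormedAddCommGroup H] [InnerProductSpace ℝ H]
          (ctx : RKHSContext lam H),
          ctx.Ch = Ch →
          (∀ v : ℕ, c₀ * ((v : ℝ) + 1) ^ (2 * m) ≤ ctx.γ v) →
          ∀ t ∈ Set.Icc (0:ℝ) 1, ‖ctx.K t‖^2 ≤ CK^2 * (lam ^ (1/(2*m)))⁻¹ := by
  set p : ℝ := 2 * m with hpdef
  have hp : 1 < p := by rw [hpdef]; linarith
  have hq : (0:ℝ) < p - 1 := by linarith
  set A : ℝ := max 1 c₀⁻¹ with hAdef
  have hA1 : (1:ℝ) ≤ A := le_max_left _ _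
  have hAc : c₀⁻¹ ≤ A := le_max_right _ _
  have hA0 : (0:ℝ) < A := lt_of_lt_of_le one_pos hA1
  set CS : ℝ := 2 + 1/(p-1) with hCSdef
  have hCS0 : (0:ℝ) < CS := by positivity
  refine ⟨Real.sqrt ((Ch^2 + 1) * A * CS), Real.sqrt_pos.mpr (by positivity), ?_⟩
  intro lam hlam H _ _ ctx hChCh hγ t ht
  rw [Real.sq_sqrt (by positivity)]
  set h : ℝ := lam ^ (1/p) with hhdef
  have hh0 : (0:ℝ) < h := Real.rpow_pos_of_pos hlam _
  have hhp : h ^ p = lam := by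
    rw [hhdef, ← Real.rpow_mul hlam.le, one_div_mul_cancel (by positivity : p ≠ 0),
      Real.rpow_one]
  have hCh0 : 0 ≤ Ch := by
    have := ctx.hvec_bound 0 t ht
    rw [hChCh] at this
    exact le_trans (abs_nonneg _) this
  set f : H := ctx.K t with hf
  set e : ℕ → ℝ := fun v => ctx.ev (ctx.hvec v) t with he
  have hD : ∀ v, (0:ℝ) < 1 + lam * ctx.γ v := fun v => by
    have := ctx.γ_pos v
    nlinarith
  have hinner_hh : ∀ u v, ⟪ctx.hvec u, ctx.hvec v⟫ =
      if u = v then 1 + lam * ctx.γ u else 0 := by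
    intro u v
    rw [ctx.inner_eq, ctx.V_orth, ctx.J_orth]
    split_ifs <;> simp
  have hfh : ∀ v, ⟪f, ctx.hvec v⟫ = e v := fun v => ctx.reproducing t ht _
  have hexp := ctx.expansion f
  have hav : ∀ v, e v = ctx.V f (ctx.hvec v) * (1 + lam * ctx.γ v) := by
    intro v
    have h1 := hexp.mapL (innerSL ℝ (ctx.hvec v))
    simp only [innerSL_apply_apply, real_inner_smul_right] at h1
    have h2 : (fun u => ctx.V f (ctx.hvec u) * ⟪ctx.hvec v, ctx.hvec u⟫) =
        fun u => if u = v then ctx.V f (ctx.hvec v) * (1 + lam * ctx.γ v) else 0 := by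
      funext u
      rw [hinner_hh v u]
      rcases eq_or_ne u v with rfl | hne
      · simp
      · simp [hne, Ne.symm hne]
    rw [h2] at h1
    have h3 := hasSum_ite_eq v (ctx.V f (ctx.hvec v) * (1 + lam * ctx.γ v))
    have h4 := h1.unique h3
    rw [real_inner_comm, hfh v] at h4
    exact h4
  have hK2 : HasSum (fun v => ctx.V f (ctx.hvec v) * e v) (‖f‖^2) := by
    have h4 := hexp.mapL (innerSL ℝ f)
    simp only [innerSL_apply_apply, real_inner_smul_right] at h4
    rw [real_inner_self_eq_norm_sq] at h4
    have h5 : (fun v => ctx.V f (ctx.hvec v) * ⟪f, ctx.hvec v⟫) =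
        fun v => ctx.V f (ctx.hvec v) * e v := by
      funext v; rw [hfh]
    rwa [h5] at h4
  -- per-term bound
  have hy0 : ∀ v : ℕ, (0:ℝ) < (h * ((v:ℝ)+1)) ^ (-p) := fun v =>
    Real.rpow_pos_of_pos (by positivity) _
  have hterm : ∀ v, ctx.V f (ctx.hvec v) * e v ≤
      (Ch^2 * A) * min 1 ((h * ((v:ℝ)+1)) ^ (-p)) := by
    intro v
    have hD0 := hD v
    have he2 : e v ^ 2 ≤ Ch ^ 2 := by
      have h1 := ctx.hvec_bound v t ht
      rw [hChCh] at h1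
      calc e v ^ 2 = |e v| ^ 2 := (sq_abs _).symm
        _ ≤ Ch ^ 2 := pow_le_pow_left₀ (abs_nonneg _) h1 2
    have hyinv : ((h * ((v:ℝ)+1)) ^ (-p))⁻¹ = lam * ((v:ℝ)+1) ^ p := by
      rw [Real.rpow_neg (by positivity), inv_inv,
        Real.mul_rpow hh0.le (by positivity), hhp]
    have hmin : (1 + lam * ctx.γ v)⁻¹ ≤ min 1 (c₀⁻¹ * (h * ((v:ℝ)+1)) ^ (-p)) := by
      refine le_min ?_ ?_
      · have h1D : (1:ℝ) ≤ 1 + lam * ctx.γ v := by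
          have := ctx.γ_pos v; nlinarith
        exact inv_le_one_of_one_le₀ h1D
      · have hDge : c₀ * ((h * ((v:ℝ)+1)) ^ (-p))⁻¹ ≤ 1 + lam * ctx.γ v := by
          rw [hyinv]
          have h6 := mul_le_mul_of_nonneg_left (hγ v) hlam.le
          nlinarith [h6]
        calc (1 + lam * ctx.γ v)⁻¹
            ≤ (c₀ * ((h * ((v:ℝ)+1)) ^ (-p))⁻¹)⁻¹ := by
              apply inv_anti₀ (by positivity) hDge
          _ = c₀⁻¹ * (h * ((v:ℝ)+1)) ^ (-p) := by
              rw [mul_inv, inv_inv]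
    have hminA : min 1 (c₀⁻¹ * (h * ((v:ℝ)+1)) ^ (-p)) ≤
        A * min 1 ((h * ((v:ℝ)+1)) ^ (-p)) := by
      rcases le_total ((h * ((v:ℝ)+1)) ^ (-p)) 1 with hle | hle
      · calc min 1 (c₀⁻¹ * (h * ((v:ℝ)+1)) ^ (-p))
            ≤ c₀⁻¹ * (h * ((v:ℝ)+1)) ^ (-p) := min_le_right _ _
          _ ≤ A * (h * ((v:ℝ)+1)) ^ (-p) :=
              mul_le_mul_of_nonneg_right hAc (hy0 v).le
          _ = A * min 1 ((h * ((v:ℝ)+1)) ^ (-p)) := by rw [min_eq_right hle]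
      · calc min 1 (c₀⁻¹ * (h * ((v:ℝ)+1)) ^ (-p)) ≤ 1 := min_le_left _ _
          _ ≤ A := hA1
          _ = A * min 1 ((h * ((v:ℝ)+1)) ^ (-p)) := by rw [min_eq_left hle, mul_one]
    have hcv : ctx.V f (ctx.hvec v) * e v = e v ^ 2 * (1 + lam * ctx.γ v)⁻¹ := by
      rw [hav v]
      field_simp
    rw [hcv]
    calc e v ^ 2 * (1 + lam * ctx.γ v)⁻¹
        ≤ Ch ^ 2 * (A * min 1 ((h * ((v:ℝ)+1)) ^ (-p))) :=
          mul_le_mul he2 (hmin.trans hminA) (inv_nonneg.mpr hD0.le) (by positivity)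
      _ = (Ch^2 * A) * min 1 ((h * ((v:ℝ)+1)) ^ (-p)) := by ring
  -- summability
  have hmaj : ∀ v : ℕ, (h * ((v:ℝ)+1)) ^ (-p) = h ^ (-p) * ((v:ℝ)+1) ^ (-p) :=
    fun v => Real.mul_rpow hh0.le (by positivity)
  have hsum_min : Summable (fun v : ℕ => min 1 ((h * ((v:ℝ)+1)) ^ (-p))) := by
    apply Summable.of_nonneg_of_le
      (fun v => le_min zero_le_one (hy0 v).le)
      (fun v => (min_le_right _ _).trans_eq (hmaj v))
    exact (summable_shift hp).mul_left _
  -- head bound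
  set N : ℕ := ⌈h⁻¹⌉₊ with hNdef
  have hNpos : 0 < N := Nat.ceil_pos.mpr (inv_pos.mpr hh0)
  have hNge : h⁻¹ ≤ (N:ℝ) := Nat.le_ceil _
  have hNle : (N:ℝ) ≤ h⁻¹ + 1 := (Nat.ceil_lt_add_one (inv_pos.mpr hh0).le).le
  have hminnn : (0:ℝ) ≤ min 1 (h ^ (-p)) :=
    le_min zero_le_one (Real.rpow_nonneg hh0.le _)
  have hhead : ∑ v ∈ Finset.range N, min 1 ((h * ((v:ℝ)+1)) ^ (-p)) ≤ 2 * h⁻¹ := by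
    have hterm1 : ∀ v ∈ Finset.range N,
        min 1 ((h * ((v:ℝ)+1)) ^ (-p)) ≤ min 1 (h ^ (-p)) := by
      intro v _
      refine min_le_min le_rfl ?_
      apply Real.rpow_le_rpow_of_nonpos hh0 _ (by linarith)
      nlinarith [Nat.cast_nonneg (α := ℝ) v]
    calc ∑ v ∈ Finset.range N, min 1 ((h * ((v:ℝ)+1)) ^ (-p))
        ≤ ∑ _v ∈ Finset.range N, min 1 (h ^ (-p)) := Finset.sum_le_sum hterm1
      _ = (N:ℝ) * min 1 (h ^ (-p)) := by
          rw [Finset.sum_const, Finset.card_range, nsmul_eq_mul]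
      _ ≤ (h⁻¹ + 1) * min 1 (h ^ (-p)) := mul_le_mul_of_nonneg_right hNle hminnn
      _ ≤ 2 * h⁻¹ := by
          rcases le_total h 1 with hc | hc
          · have h1le : (1:ℝ) ≤ h⁻¹ := (one_le_inv₀ hh0).mpr hc
            calc (h⁻¹ + 1) * min 1 (h ^ (-p))
                ≤ (h⁻¹ + h⁻¹) * 1 := by
                  apply mul_le_mul (by linarith) (min_le_left _ _) hminnn (by positivity)
              _ = 2 * h⁻¹ := by ring
          · have hple : h ^ (-p) ≤ h⁻¹ := by
              rw [← Real.rpow_neg_one h]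
              exact Real.rpow_le_rpow_of_exponent_le hc (by linarith)
            have hinv1 : h⁻¹ ≤ 1 := inv_le_one_of_one_le₀ hc
            apply mul_le_mul (by linarith) ((min_le_right _ _).trans hple) hminnn
              (by norm_num)
  -- tail bound
  have htail : ∑' v : ℕ, min 1 ((h * (((v + N : ℕ):ℝ)+1)) ^ (-p)) ≤
      1/(p-1) * h⁻¹ := by
    have hle : ∀ v : ℕ, min 1 ((h * (((v + N : ℕ):ℝ)+1)) ^ (-p)) ≤
        h ^ (-p) * ((N:ℝ) + v + 1) ^ (-p) := by
      intro v
      have harg : ((v + N : ℕ):ℝ) + 1 = (N:ℝ) + v + 1 := by push_cast; ring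
      rw [harg]
      exact (min_le_right _ _).trans_eq (Real.mul_rpow hh0.le (by positivity))
    have hsum1 : Summable (fun v : ℕ => ((N:ℝ) + v + 1) ^ (-p)) := by
      refine ((summable_nat_add_iff N).mpr (summable_shift hp)).congr fun v => ?_
      push_cast
      ring_nf
    calc ∑' v : ℕ, min 1 ((h * (((v + N : ℕ):ℝ)+1)) ^ (-p))
        ≤ ∑' v : ℕ, h ^ (-p) * ((N:ℝ) + v + 1) ^ (-p) :=
          Summable.tsum_le_tsum hle ((summable_nat_add_iff N).mpr hsum_min) (hsum1.mul_left _)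
      _ = h ^ (-p) * ∑' v : ℕ, ((N:ℝ) + v + 1) ^ (-p) := tsum_mul_left
      _ ≤ h ^ (-p) * (1/(p-1) * (N:ℝ) ^ (-(p-1))) := by
          apply mul_le_mul_of_nonneg_left (rpow_tail_bound hp N hNpos)
            (Real.rpow_nonneg hh0.le _)
      _ ≤ h ^ (-p) * (1/(p-1) * h ^ (p-1)) := by
          have hNq : (N:ℝ) ^ (-(p-1)) ≤ h ^ (p-1) := by
            have h7 := Real.rpow_le_rpow_of_nonpos (inv_pos.mpr hh0) hNge
              (neg_nonpos.mpr hq.le)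
            rwa [Real.inv_rpow hh0.le, Real.rpow_neg hh0.le, inv_inv] at h7
          apply mul_le_mul_of_nonneg_left _ (Real.rpow_nonneg hh0.le _)
          exact mul_le_mul_of_nonneg_left hNq (by positivity)
      _ = 1/(p-1) * h⁻¹ := by
          have h8 : h ^ (-p) * h ^ (p-1) = h⁻¹ := by
            rw [← Real.rpow_add hh0, show -p + (p-1) = -1 by ring, Real.rpow_neg_one]
          calc h ^ (-p) * (1/(p-1) * h ^ (p-1))
              = 1/(p-1) * (h ^ (-p) * h ^ (p-1)) := by ring
            _ = 1/(p-1) * h⁻¹ := by rw [h8]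
  -- total bound on T
  have hT : ∑' v : ℕ, min 1 ((h * ((v:ℝ)+1)) ^ (-p)) ≤ CS * h⁻¹ := by
    rw [← Summable.sum_add_tsum_nat_add N hsum_min]
    calc (∑ v ∈ Finset.range N, min 1 ((h * ((v:ℝ)+1)) ^ (-p))) +
          ∑' v : ℕ, min 1 ((h * (((v + N : ℕ):ℝ)+1)) ^ (-p))
        ≤ 2 * h⁻¹ + 1/(p-1) * h⁻¹ := add_le_add hhead htail
      _ = CS * h⁻¹ := by rw [hCSdef]; ring
  -- conclude
  have hfinal : ‖f‖^2 ≤ (Ch^2 * A) * (CS * h⁻¹) := by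
    calc ‖f‖^2 = ∑' v : ℕ, ctx.V f (ctx.hvec v) * e v := hK2.tsum_eq.symm
      _ ≤ ∑' v : ℕ, (Ch^2 * A) * min 1 ((h * ((v:ℝ)+1)) ^ (-p)) :=
          Summable.tsum_le_tsum hterm hK2.summable (hsum_min.mul_left _)
      _ = (Ch^2 * A) * ∑' v : ℕ, min 1 ((h * ((v:ℝ)+1)) ^ (-p)) := tsum_mul_left
      _ ≤ (Ch^2 * A) * (CS * h⁻¹) := by
          apply mul_le_mul_of_nonneg_left hT (by positivity)
  calc ‖ctx.K t‖^2 ≤ (Ch^2 * A) * (CS * h⁻¹) := hfinal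
    _ ≤ (Ch^2 + 1) * A * CS * h⁻¹ := by
        nlinarith [mul_nonneg (mul_nonneg hA0.le hCS0.le) (inv_nonneg.mpr hh0.le)]

end
end

section
/- There exists a constant C_K > 0, depending only on m, c₀ and C_h, such that |f(t)| ≤ C_K h^{-1/2} ‖f‖ for every f ∈ ℋ and every t ∈ [0,1]; that is, sup_{t∈[0,1]} |f(t)| ≤ C_K h^{-1/2} ‖f‖ for all f ∈ ℋ. -/
open scoped RealInnerProductSpace
open MeasureTheory

noncomputable section

section AuxLemmas

lemma bern_step {t q : ℝ} (ht0 : 0 < t) (ht1 : t ≤ 1) (hq : 0 < q) :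
    1 + q * (1 - t) ≤ t ^ (-q) := by
  rcases le_or_gt 1 q with hq1 | hq1
  · have hu : (0:ℝ) ≤ t⁻¹ - 1 := by
      rw [sub_nonneg, one_le_inv_iff₀]; exact ⟨ht0, ht1⟩
    have hb := one_add_mul_self_le_rpow_one_add (by linarith : (-1:ℝ) ≤ t⁻¹ - 1) hq1
    rw [add_sub_cancel] at hb
    have hinv : t⁻¹ ^ q = t ^ (-q) := by
      rw [Real.inv_rpow ht0.le, Real.rpow_neg ht0.le]
    have hu2 : 1 - t ≤ t⁻¹ - 1 := by
      have h3 : t * (t⁻¹ - 1) = 1 - t := by field_simp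
      nlinarith [mul_le_of_le_one_left hu ht1]
    calc 1 + q * (1 - t) ≤ 1 + q * (t⁻¹ - 1) := by nlinarith
      _ ≤ t⁻¹ ^ q := hb
      _ = t ^ (-q) := hinv
  · have hb := rpow_one_add_le_one_add_mul_self (by linarith : (-1:ℝ) ≤ t - 1) hq.le hq1.le
    rw [add_sub_cancel] at hb
    have hA : 0 < t ^ q := Real.rpow_pos_of_pos ht0 q
    have hAB : t ^ q * t ^ (-q) = 1 := by
      rw [← Real.rpow_add ht0]; simp
    have hBpos : 0 < t ^ (-q) := Real.rpow_pos_of_pos ht0 _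
    have hden : 0 < 1 + q * (t - 1) := by nlinarith
    have hmul : (1 + q * (1 - t)) * (1 + q * (t - 1)) ≤ 1 := by nlinarith [sq_nonneg (q * (1 - t))]
    nlinarith [mul_le_mul_of_nonneg_left hb (by nlinarith : (0:ℝ) ≤ 1 + q * (1 - t))]

lemma tele_step {x q : ℝ} (hx : 1 ≤ x) (hq : 0 < q) :
    q * (x + 1) ^ (-(q + 1)) ≤ x ^ (-q) - (x + 1) ^ (-q) := by
  have hx0 : 0 < x := by linarith
  have hx1 : 0 < x + 1 := by linarith
  have ht0 : 0 < x / (x + 1) := div_pos hx0 hx1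
  have ht1 : x / (x + 1) ≤ 1 := by rw [div_le_one hx1]; linarith
  have h1t : 1 - x / (x + 1) = (x + 1)⁻¹ := by field_simp; ring
  have hxt : (x + 1) * (x / (x + 1)) = x := by field_simp
  have hxq : x ^ (-q) = (x + 1) ^ (-q) * (x / (x + 1)) ^ (-q) := by
    rw [← Real.mul_rpow hx1.le ht0.le, hxt]
  have hb := bern_step ht0 ht1 hq
  rw [h1t] at hb
  have hsplit : (x + 1) ^ (-(q + 1)) = (x + 1) ^ (-q) * (x + 1)⁻¹ := by
    rw [show -(q+1) = -q + (-1) by ring, Real.rpow_add hx1, Real.rpow_neg_one]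
  have hp1 : 0 < (x + 1) ^ (-q) := Real.rpow_pos_of_pos hx1 _
  rw [hxq, hsplit]
  nlinarith [mul_le_mul_of_nonneg_left hb hp1.le]

lemma tail_sum_le {p : ℝ} (hp : 1 < p) {N : ℕ} (hN : 1 ≤ N) :
    ∑' k : ℕ, ((N : ℝ) + k + 1) ^ (-p) ≤ (N : ℝ) ^ (1 - p) / (p - 1) := by
  have hq : 0 < p - 1 := by linarith
  have hN1 : (1:ℝ) ≤ (N:ℝ) := by exact_mod_cast hN
  have hN0 : (0:ℝ) < (N:ℝ) := by linarith
  apply Real.tsum_le_of_sum_range_le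
  · intro n; positivity
  · intro n
    have key : ∀ k : ℕ, ((N : ℝ) + k + 1) ^ (-p) ≤
        (1/(p-1)) * (((N:ℝ) + k) ^ (-(p-1)) - ((N:ℝ) + (k+1) : ℝ) ^ (-(p-1))) := by
      intro k
      have hx : (1:ℝ) ≤ (N:ℝ) + k := by
        have : (0:ℝ) ≤ (k:ℝ) := Nat.cast_nonneg k
        linarith
      have h := tele_step hx hq
      rw [show -((p-1) + 1) = -p by ring] at h
      have h2 : ((N:ℝ) + k) + 1 = (N:ℝ) + ((k:ℕ)+1) := by ring
      rw [h2] at h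
      have h3 := mul_le_mul_of_nonneg_left h (le_of_lt (one_div_pos.mpr hq))
      have h4 : 1/(p-1) * ((p-1) * ((N:ℝ) + ((k:ℕ)+1):ℝ) ^ (-p)) = ((N:ℝ) + ((k:ℕ)+1):ℝ) ^ (-p) := by
        field_simp
      rw [h4] at h3
      rw [show (N:ℝ) + (k:ℕ) + 1 = ((N:ℝ) + ((k:ℕ)+1) : ℝ) by ring]
      exact h3
    calc ∑ k ∈ Finset.range n, ((N : ℝ) + k + 1) ^ (-p)
        ≤ ∑ k ∈ Finset.range n, (1/(p-1)) * (((N:ℝ) + k) ^ (-(p-1)) - ((N:ℝ) + (k+1) : ℝ) ^ (-(p-1))) :=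
          Finset.sum_le_sum fun k _ => key k
      _ = (1/(p-1)) * (((N:ℝ) + (0:ℕ)) ^ (-(p-1)) - ((N:ℝ) + (n:ℕ)) ^ (-(p-1))) := by
          rw [← Finset.mul_sum]
          congr 1
          have := Finset.sum_range_sub' (fun k : ℕ => ((N:ℝ) + k) ^ (-(p-1))) n
          simpa using this
      _ ≤ (1/(p-1)) * ((N:ℝ)) ^ (-(p-1)) := by
          have : (0:ℝ) ≤ ((N:ℝ) + (n:ℕ)) ^ (-(p-1)) := by positivity
          have h5 : ((N:ℝ) + (0:ℕ)) = (N:ℝ) := by push_cast; ring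
          rw [h5]
          nlinarith [one_div_pos.mpr hq]
      _ = (N : ℝ) ^ (1 - p) / (p - 1) := by
          rw [show -(p-1) = 1 - p by ring]; ring

lemma f_summable {p c₀ lam : ℝ} (hp : 1 < p) (hc₀ : 0 < c₀) (hlam : 0 < lam) :
    Summable (fun v : ℕ => (1 + lam * (c₀ * ((v:ℝ)+1) ^ p))⁻¹) := by
  have hsumg : Summable (fun v : ℕ => ((v:ℝ)+1) ^ (-p)) := by
    have h1 : Summable (fun n : ℕ => (n:ℝ) ^ (-p)) :=
      Real.summable_nat_rpow.mpr (by linarith)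
    have h2 := (summable_nat_add_iff 1).mpr h1
    apply h2.congr
    intro n; push_cast; ring_nf
  apply Summable.of_nonneg_of_le _ _ (hsumg.mul_left (lam * c₀)⁻¹)
  · intro v; positivity
  · intro v
    have key : (lam * c₀)⁻¹ * ((v:ℝ)+1) ^ (-p) = (lam * (c₀ * ((v:ℝ)+1) ^ p))⁻¹ := by
      rw [Real.rpow_neg (by positivity : (0:ℝ) ≤ (v:ℝ)+1), ← mul_inv, mul_assoc]
    rw [key]
    apply inv_anti₀
    · positivity
    · have : (0:ℝ) < ((v:ℝ)+1) ^ p := by positivity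
      nlinarith

lemma S_le {p c₀ : ℝ} (hp : 1 < p) (hc₀ : 0 < c₀) {lam : ℝ} (hlam : 0 < lam) :
    ∑' v : ℕ, (1 + lam * (c₀ * ((v:ℝ)+1) ^ p))⁻¹ ≤
      (2 + 1/c₀ + 1/(c₀*(p-1))) * (lam ^ (1/p))⁻¹ := by
  have hp0 : p ≠ 0 := by positivity
  set h : ℝ := lam ^ (1/p) with hhdef
  have hh : 0 < h := Real.rpow_pos_of_pos hlam _
  have hhp : h ^ p = lam := by
    rw [hhdef, ← Real.rpow_mul hlam.le, one_div_mul_cancel hp0, Real.rpow_one]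
  set f : ℕ → ℝ := fun v => (1 + lam * (c₀ * ((v:ℝ)+1) ^ p))⁻¹ with hfdef
  have hden : ∀ v : ℕ, 0 < 1 + lam * (c₀ * ((v:ℝ)+1) ^ p) := by
    intro v; positivity
  have hf0 : ∀ v, 0 ≤ f v := fun v => (inv_pos.mpr (hden v)).le
  have hf1 : ∀ v, f v ≤ 1 := by
    intro v
    rw [hfdef]
    have h1 : (1:ℝ) ≤ 1 + lam * (c₀ * ((v:ℝ)+1) ^ p) := by
      have : (0:ℝ) ≤ lam * (c₀ * ((v:ℝ)+1) ^ p) := by positivity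
      linarith
    simpa using inv_le_one_of_one_le₀ h1
  set g : ℕ → ℝ := fun v => ((v:ℝ)+1) ^ (-p) with hgdef
  have hsumg : Summable g := by
    have h1 : Summable (fun n : ℕ => (n:ℝ) ^ (-p)) :=
      Real.summable_nat_rpow.mpr (by linarith)
    have h2 := (summable_nat_add_iff 1).mpr h1
    apply h2.congr
    intro n; rw [hgdef]; push_cast; ring_nf
  have hfg : ∀ v, f v ≤ (lam * c₀)⁻¹ * g v := by
    intro v
    have hx : (0:ℝ) < ((v:ℝ)+1) ^ p := by positivity
    have key : (lam * c₀)⁻¹ * g v = (lam * (c₀ * ((v:ℝ)+1) ^ p))⁻¹ := by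
      simp only [hgdef]
      rw [Real.rpow_neg (by positivity : (0:ℝ) ≤ (v:ℝ)+1), ← mul_inv, mul_assoc]
    rw [key, hfdef]
    apply inv_anti₀
    · positivity
    · linarith [ (hden v) ]
  have hsumf : Summable f :=
    Summable.of_nonneg_of_le hf0 hfg (hsumg.mul_left _)
  set N : ℕ := ⌈h⁻¹⌉₊ with hNdef
  have hN1 : 1 ≤ N := Nat.one_le_ceil_iff.mpr (by positivity)
  have hNge : h⁻¹ ≤ (N:ℝ) := Nat.le_ceil _
  have hNpos : (0:ℝ) < (N:ℝ) := by
    calc (0:ℝ) < h⁻¹ := by positivity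
      _ ≤ N := hNge
  have hsplit := (Summable.sum_add_tsum_nat_add N hsumf).symm
  have hhead : ∑ v ∈ Finset.range N, f v ≤ (2 + 1/c₀) * h⁻¹ := by
    rcases le_or_gt h 1 with hc | hc
    · have hNle : (N:ℝ) ≤ h⁻¹ + 1 := (Nat.ceil_lt_add_one (by positivity)).le
      have hinv1 : (1:ℝ) ≤ h⁻¹ := one_le_inv_iff₀.mpr ⟨hh, hc⟩
      calc ∑ v ∈ Finset.range N, f v ≤ ∑ v ∈ Finset.range N, 1 :=
            Finset.sum_le_sum fun v _ => hf1 v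
        _ = (N:ℝ) := by simp
        _ ≤ 2 * h⁻¹ := by linarith
        _ ≤ (2 + 1/c₀) * h⁻¹ := by
            have : (0:ℝ) < 1/c₀ := by positivity
            nlinarith
    · have hNeq : N = 1 := by
        have hle : N ≤ 1 := by
          rw [hNdef]
          apply Nat.ceil_le.mpr
          rw [Nat.cast_one]
          exact inv_le_one_of_one_le₀ hc.le
        omega
      have hf0le : f 0 ≤ c₀⁻¹ * h⁻¹ := by
        have h1 : f 0 ≤ (lam * c₀)⁻¹ * g 0 := hfg 0
        have hg0 : g 0 = 1 := by
          rw [hgdef]; norm_num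
        rw [hg0, mul_one] at h1
        have h2 : (lam * c₀)⁻¹ = c₀⁻¹ * h ^ (-p) := by
          rw [← hhp, mul_inv, ← Real.rpow_neg hh.le, mul_comm]
        have h3 : h ^ (-p) ≤ h⁻¹ := by
          calc h ^ (-p) ≤ h ^ (-1 : ℝ) :=
                Real.rpow_le_rpow_of_exponent_le hc.le (by linarith)
            _ = h⁻¹ := by rw [Real.rpow_neg_one]
        calc f 0 ≤ (lam * c₀)⁻¹ := h1
          _ = c₀⁻¹ * h ^ (-p) := h2
          _ ≤ c₀⁻¹ * h⁻¹ := by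
              apply mul_le_mul_of_nonneg_left h3 (by positivity)
      rw [hNeq]
      calc ∑ v ∈ Finset.range 1, f v = f 0 := by simp
        _ ≤ c₀⁻¹ * h⁻¹ := hf0le
        _ ≤ (2 + 1/c₀) * h⁻¹ := by
            rw [one_div]
            nlinarith [inv_pos.mpr hh, inv_pos.mpr hc₀]
  have htail : ∑' i : ℕ, f (i + N) ≤ (1/(c₀*(p-1))) * h⁻¹ := by
    have hsumtail : Summable (fun i : ℕ => ((N:ℝ) + i + 1) ^ (-p)) := by
      have h2 := (summable_nat_add_iff N).mpr hsumg
      apply h2.congr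
      intro n; rw [hgdef]; push_cast; ring_nf
    have hterm : ∀ i : ℕ, f (i + N) ≤ (lam * c₀)⁻¹ * ((N:ℝ) + i + 1) ^ (-p) := by
      intro i
      have h0 := hfg (i + N)
      simp only [hgdef] at h0
      push_cast at h0
      rwa [show (i:ℝ) + (N:ℝ) + 1 = (N:ℝ) + i + 1 from by ring] at h0
    calc ∑' i : ℕ, f (i + N)
        ≤ ∑' i : ℕ, (lam * c₀)⁻¹ * ((N:ℝ) + i + 1) ^ (-p) := by
          apply Summable.tsum_le_tsum hterm
          · exact (summable_nat_add_iff N).mpr hsumf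
          · exact hsumtail.mul_left _
      _ = (lam * c₀)⁻¹ * ∑' i : ℕ, ((N:ℝ) + i + 1) ^ (-p) := tsum_mul_left
      _ ≤ (lam * c₀)⁻¹ * ((N:ℝ) ^ (1 - p) / (p - 1)) := by
          apply mul_le_mul_of_nonneg_left (tail_sum_le hp hN1) (by positivity)
      _ ≤ (1/(c₀*(p-1))) * h⁻¹ := by
          have hNrp : (N:ℝ) ^ (1 - p) ≤ h ^ (p - 1) := by
            calc (N:ℝ) ^ (1 - p) ≤ (h⁻¹) ^ (1 - p) :=
                  Real.rpow_le_rpow_of_nonpos (by positivity) hNge (by linarith)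
              _ = h ^ (p - 1) := by
                  rw [Real.inv_rpow hh.le, ← Real.rpow_neg hh.le,
                    show -(1-p) = p - 1 from by ring]
          have hlc : (lam * c₀)⁻¹ = c₀⁻¹ * h ^ (-p) := by
            rw [← hhp, mul_inv, ← Real.rpow_neg hh.le, mul_comm]
          rw [hlc]
          have hfin : h ^ (-p) * h ^ (p-1) = h⁻¹ := by
            rw [← Real.rpow_add hh]
            rw [show -p + (p - 1) = -1 by ring, Real.rpow_neg_one]
          calc c₀⁻¹ * h ^ (-p) * ((N:ℝ) ^ (1 - p) / (p - 1))
              ≤ c₀⁻¹ * h ^ (-p) * (h ^ (p-1) / (p - 1)) := by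
                apply mul_le_mul_of_nonneg_left _ (by positivity)
                gcongr
            _ = (1/(c₀*(p-1))) * h⁻¹ := by
                rw [show c₀⁻¹ * h ^ (-p) * (h ^ (p-1) / (p - 1))
                    = c₀⁻¹ * (h ^ (-p) * h ^ (p-1)) / (p-1) from by ring, hfin]
                field_simp
  calc ∑' v : ℕ, f v = (∑ v ∈ Finset.range N, f v) + ∑' i : ℕ, f (i + N) := hsplit
    _ ≤ (2 + 1/c₀) * h⁻¹ + (1/(c₀*(p-1))) * h⁻¹ := add_le_add hhead htail
    _ = (2 + 1/c₀ + 1/(c₀*(p-1))) * h⁻¹ := by ring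

end AuxLemmas

lemma KK_hasSum {lam : ℝ} {H : Type} [NormedAddCommGroup H] [InnerProductSpace ℝ H]
    (ctx : RKHSContext lam H) (hlam : 0 < lam) {t : ℝ} (ht : t ∈ Set.Icc (0:ℝ) 1) :
    HasSum (fun v => (ctx.ev (ctx.hvec v) t) ^ 2 / (1 + lam * ctx.γ v)) ⟪ctx.K t, ctx.K t⟫ := by
  set a : ℕ → ℝ := fun v => ctx.V (ctx.K t) (ctx.hvec v) with hadef
  have hexp := ctx.expansion (ctx.K t)
  have hinnerhh : ∀ u v : ℕ, ⟪ctx.hvec u, ctx.hvec v⟫ = if u = v then 1 + lam * ctx.γ u else 0 := by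
    intro u v
    rw [ctx.inner_eq, ctx.V_orth, ctx.J_orth]
    split_ifs with huv
    · ring
    · ring
  have hdpos : ∀ v, 0 < 1 + lam * ctx.γ v := by
    intro v
    have := ctx.γ_pos v
    nlinarith
  have hKh : ∀ v : ℕ, ⟪ctx.K t, ctx.hvec v⟫ = a v * (1 + lam * ctx.γ v) := by
    intro v
    have h1 : HasSum (fun u => ⟪ctx.hvec v, a u • ctx.hvec u⟫) ⟪ctx.hvec v, ctx.K t⟫ :=
      hexp.mapL (innerSL ℝ (ctx.hvec v))
    have h2 : (fun u => ⟪ctx.hvec v, a u • ctx.hvec u⟫)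
        = fun u => if u = v then a v * (1 + lam * ctx.γ v) else 0 := by
      funext u
      rw [real_inner_smul_right, real_inner_comm, hinnerhh]
      split_ifs with huv
      · subst huv; ring
      · ring
    rw [h2] at h1
    have h3 : HasSum (fun u => if u = v then a v * (1 + lam * ctx.γ v) else 0)
        (a v * (1 + lam * ctx.γ v)) := hasSum_ite_eq v _
    rw [real_inner_comm]
    exact h1.unique h3
  have hKhev : ∀ v : ℕ, ⟪ctx.K t, ctx.hvec v⟫ = ctx.ev (ctx.hvec v) t := fun v =>
    ctx.reproducing t ht (ctx.hvec v)
  have hKK : HasSum (fun v => a v * ctx.ev (ctx.hvec v) t) ⟪ctx.K t, ctx.K t⟫ := by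
    have h1 : HasSum (fun v => ⟪ctx.K t, a v • ctx.hvec v⟫) ⟪ctx.K t, ctx.K t⟫ :=
      hexp.mapL (innerSL ℝ (ctx.K t))
    have h2 : (fun v => ⟪ctx.K t, a v • ctx.hvec v⟫) = fun v => a v * ctx.ev (ctx.hvec v) t := by
      funext v
      rw [real_inner_smul_right, hKhev v]
    rwa [h2] at h1
  have he : ∀ v, ctx.ev (ctx.hvec v) t = a v * (1 + lam * ctx.γ v) := fun v =>
    (hKhev v).symm.trans (hKh v)
  have hfun : (fun v => (ctx.ev (ctx.hvec v) t) ^ 2 / (1 + lam * ctx.γ v))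
      = fun v => a v * ctx.ev (ctx.hvec v) t := by
    funext v
    rw [he v]
    field_simp [(hdpos v).ne']
  rw [hfun]
  exact hKK

/-- There exists a constant `C_K > 0`, depending only on `m`, `c₀` and
`C_h`, such that `|f(t)| ≤ C_K h^{-1/2} ‖f‖` for every `f ∈ ℋ` and `t ∈ [0,1]`, where
`h = λ^{1/(2m)}` and `γ_v ≥ c₀ v^{2m}`. -/
theorem sup_norm_le (m c₀ Ch : ℝ) (hm : 1/2 < m) (hc₀ : 0 < c₀) :
    ∃ CK : ℝ, 0 < CK ∧
      ∀ (lam : ℝ), 0 < lam →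
        ∀ (H : Type) [NormedAddCommGroup H] [InnerProductSpace ℝ H]
          (ctx : RKHSContext lam H),
          ctx.Ch = Ch →
          (∀ v : ℕ, c₀ * ((v : ℝ) + 1) ^ (2 * m) ≤ ctx.γ v) →
          ∀ (f : H), ∀ t ∈ Set.Icc (0:ℝ) 1,
            |ctx.ev f t| ≤ CK * (lam ^ (1/(2*m))) ^ (-(1/2) : ℝ) * ‖f‖ := by
  set p : ℝ := 2 * m with hpdef
  have hp : 1 < p := by rw [hpdef]; linarith
  set C₁ : ℝ := 2 + 1/c₀ + 1/(c₀*(p-1)) with hC₁def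
  have hC₁ : 0 < C₁ := by
    have h1 : 0 < 1/c₀ := by positivity
    have h2 : 0 < 1/(c₀*(p-1)) := by
      apply one_div_pos.mpr
      apply mul_pos hc₀
      linarith
    rw [hC₁def]; linarith
  refine ⟨(|Ch| + 1) * Real.sqrt C₁, by positivity, ?_⟩
  intro lam hlam H _ _ ctx hCh hγ f t ht
  set CK : ℝ := (|Ch| + 1) * Real.sqrt C₁ with hCKdef
  set h : ℝ := lam ^ (1/p) with hhdef
  have hh : 0 < h := Real.rpow_pos_of_pos hlam _
  have hKK := KK_hasSum ctx hlam ht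
  have hdpos : ∀ v, 0 < 1 + lam * ctx.γ v := by
    intro v
    have := ctx.γ_pos v
    nlinarith
  have hbound : ∀ v : ℕ,
      (ctx.ev (ctx.hvec v) t) ^ 2 / (1 + lam * ctx.γ v)
        ≤ (|Ch| + 1)^2 * (1 + lam * (c₀ * ((v:ℝ)+1) ^ p))⁻¹ := by
    intro v
    have he : |ctx.ev (ctx.hvec v) t| ≤ Ch := by
      rw [← hCh]; exact ctx.hvec_bound v t ht
    have he2 : (ctx.ev (ctx.hvec v) t) ^ 2 ≤ (|Ch| + 1)^2 := by
      have h1 : |ctx.ev (ctx.hvec v) t| ≤ |Ch| + 1 :=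
        le_trans he (by linarith [le_abs_self Ch])
      calc (ctx.ev (ctx.hvec v) t) ^ 2 = |ctx.ev (ctx.hvec v) t| ^ 2 := (sq_abs _).symm
        _ ≤ (|Ch| + 1)^2 := by
            exact pow_le_pow_left₀ (abs_nonneg _) h1 2
    have hd : (1 + lam * ctx.γ v)⁻¹ ≤ (1 + lam * (c₀ * ((v:ℝ)+1) ^ p))⁻¹ := by
      apply inv_anti₀
      · positivity
      · have := hγ v
        have h2 : c₀ * ((v:ℝ)+1) ^ p ≤ ctx.γ v := by rw [hpdef]; exact this
        nlinarith
    calc (ctx.ev (ctx.hvec v) t) ^ 2 / (1 + lam * ctx.γ v)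
        = (ctx.ev (ctx.hvec v) t) ^ 2 * (1 + lam * ctx.γ v)⁻¹ := div_eq_mul_inv _ _
      _ ≤ (|Ch| + 1)^2 * (1 + lam * (c₀ * ((v:ℝ)+1) ^ p))⁻¹ := by
          exact mul_le_mul he2 hd (inv_pos.mpr (hdpos v)).le (by positivity)
  have hsumb := (f_summable hp hc₀ hlam).mul_left ((|Ch| + 1)^2)
  have hKKle : ⟪ctx.K t, ctx.K t⟫ ≤ (|Ch| + 1)^2 * (C₁ * h⁻¹) := by
    calc ⟪ctx.K t, ctx.K t⟫
        = ∑' v : ℕ, (ctx.ev (ctx.hvec v) t) ^ 2 / (1 + lam * ctx.γ v) := hKK.tsum_eq.symm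
      _ ≤ ∑' v : ℕ, (|Ch| + 1)^2 * (1 + lam * (c₀ * ((v:ℝ)+1) ^ p))⁻¹ :=
          Summable.tsum_le_tsum hbound hKK.summable hsumb
      _ = (|Ch| + 1)^2 * ∑' v : ℕ, (1 + lam * (c₀ * ((v:ℝ)+1) ^ p))⁻¹ := tsum_mul_left
      _ ≤ (|Ch| + 1)^2 * (C₁ * h⁻¹) := by
          apply mul_le_mul_of_nonneg_left _ (by positivity)
          exact S_le hp hc₀ hlam
  have hnorm2 : ‖ctx.K t‖^2 ≤ (CK * h ^ (-(1/2) : ℝ))^2 := by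
    have hr : (CK * h ^ (-(1/2) : ℝ))^2 = (|Ch| + 1)^2 * (C₁ * h⁻¹) := by
      rw [hCKdef, mul_pow, mul_pow, Real.sq_sqrt hC₁.le]
      have : (h ^ (-(1/2) : ℝ))^2 = h⁻¹ := by
        rw [← Real.rpow_natCast (h ^ (-(1/2) : ℝ)) 2, ← Real.rpow_mul hh.le]
        norm_num
        exact Real.rpow_neg_one h
      rw [this]
      ring
    rw [hr, ← real_inner_self_eq_norm_sq]
    exact hKKle
  have hnorm : ‖ctx.K t‖ ≤ CK * h ^ (-(1/2) : ℝ) := by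
    have h1 : (0:ℝ) ≤ CK * h ^ (-(1/2) : ℝ) := by positivity
    calc ‖ctx.K t‖ = Real.sqrt (‖ctx.K t‖^2) := (Real.sqrt_sq (norm_nonneg _)).symm
      _ ≤ Real.sqrt ((CK * h ^ (-(1/2) : ℝ))^2) := Real.sqrt_le_sqrt hnorm2
      _ = CK * h ^ (-(1/2) : ℝ) := Real.sqrt_sq h1
  calc |ctx.ev f t| = |⟪ctx.K t, f⟫| := by rw [ctx.reproducing t ht f]
    _ ≤ ‖ctx.K t‖ * ‖f‖ := abs_real_inner_le_norm _ _
    _ ≤ CK * h ^ (-(1/2) : ℝ) * ‖f‖ :=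
        mul_le_mul_of_nonneg_right hnorm (norm_nonneg f)
end
end

section
/- For every g ∈ ℋ, the ℋ-valued Bochner integral 𝔼[g(T) K_T] exists and satisfies 𝔼[g(T) K_T] + W_λ g = g; equivalently, the linear operator g ↦ 𝔼[g(T) K_T] + W_λ g is the identity operator on ℋ. -/
open scoped RealInnerProductSpace
open MeasureTheory

noncomputable section

/-- For every `g ∈ ℋ`, the `ℋ`-valued Bochner integral `𝔼[g(T) K_T]`
exists and `𝔼[g(T) K_T] + W_λ g = g`; i.e. `g ↦ 𝔼[g(T) K_T] + W_λ g` is the identity. -/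
theorem expectation_eval_smul_kernel_add_W_eq_id
    (m lam : ℝ) (hm : 1/2 < m) (hlam : 0 < lam)
    {H : Type*} [NormedAddCommGroup H] [InnerProductSpace ℝ H] [CompleteSpace H]
    [MeasurableSpace H] [BorelSpace H]
    (ctx : RKHSContext lam H)
    (c₀ : ℝ) (hc₀ : 0 < c₀)
    (hγ : ∀ v : ℕ, c₀ * ((v : ℝ) + 1) ^ (2 * m) ≤ ctx.γ v)
    {Ω : Type*} [MeasurableSpace Ω] (P : Measure Ω) [IsProbabilityMeasure P]
    (T : Ω → ℝ) (hT : Measurable T) (hTr : ∀ ω, T ω ∈ Set.Icc (0:ℝ) 1)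
    (hV : ∀ f g : H, ctx.V f g = ∫ ω, ctx.ev f (T ω) * ctx.ev g (T ω) ∂P)
    (hK : Measurable ctx.K) :
    ∀ g : H,
      Integrable (fun ω => ctx.ev g (T ω) • ctx.K (T ω)) P ∧
      (∫ ω, ctx.ev g (T ω) • ctx.K (T ω) ∂P) + ctx.W g = g := by

  intro g
  -- `H` is separable, hence second countable
  have hsepS : TopologicalSpace.IsSeparable (Set.univ : Set H) := by
    have hcount : (Set.range ctx.hvec).Countable := Set.countable_range _
    refine ((hcount.isSeparable.span (R := ℝ)).closure).mono ?_
    intro x _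
    refine mem_closure_of_tendsto (ctx.expansion x) (Filter.Eventually.of_forall ?_)
    intro s
    exact Submodule.sum_mem _ fun v _ =>
      Submodule.smul_mem _ _ (Submodule.subset_span (Set.mem_range_self v))
  haveI : TopologicalSpace.SeparableSpace H := TopologicalSpace.isSeparable_univ_iff.1 hsepS
  haveI : SecondCountableTopology H := UniformSpace.secondCountable_of_separable H
  -- basic positivity
  have hden : ∀ v : ℕ, 0 < 1 + lam * ctx.γ v := fun v => by
    have := ctx.γ_pos v; nlinarith
  have hpow : ∀ v : ℕ, (0:ℝ) < ((v : ℝ) + 1) ^ (2 * m) := fun v =>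
    Real.rpow_pos_of_pos (by positivity) _
  -- the comparison series
  set b : ℕ → ℝ := fun v => ctx.Ch ^ 2 / (lam * (c₀ * ((v : ℝ) + 1) ^ (2 * m))) with hb_def
  have hb : Summable b := by
    have h1 : Summable (fun n : ℕ => (((n : ℝ)) ^ (2 * m))⁻¹) :=
      Real.summable_nat_rpow_inv.2 (by linarith)
    have h2 : Summable (fun v : ℕ => ((((v : ℝ) + 1)) ^ (2 * m))⁻¹) := by
      have := (summable_nat_add_iff (f := fun n : ℕ => (((n : ℝ)) ^ (2 * m))⁻¹) 1).2 h1
      simpa [Nat.cast_add] using this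
    have h3 : Summable (fun v : ℕ =>
        (ctx.Ch ^ 2 / (lam * c₀)) * ((((v : ℝ) + 1)) ^ (2 * m))⁻¹) := h2.mul_left _
    refine h3.congr fun v => ?_
    simp only [hb_def, ← mul_assoc, div_eq_mul_inv, mul_inv]
  -- uniform bound on the kernel
  have hKbound : ∀ t ∈ Set.Icc (0:ℝ) 1, ‖ctx.K t‖ ^ 2 ≤ ∑' v, b v := by
    intro t ht
    have hexp := ctx.expansion (ctx.K t)
    set a : ℕ → ℝ := fun v => ctx.V (ctx.K t) (ctx.hvec v) with ha_def
    have hrep : ∀ f : H, ⟪ctx.K t, f⟫ = ctx.ev f t := ctx.reproducing t ht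
    -- pairwise inner products
    have hpair : ∀ u v : ℕ,
        (inner ℝ (ctx.hvec u) (ctx.hvec v) : ℝ) = if u = v then 1 + lam * ctx.γ u else 0 := by
      intro u v
      rw [ctx.inner_eq, ctx.V_orth, ctx.J_orth]
      by_cases h : u = v <;> simp [h]
    -- compute the coefficients
    have hav : ∀ v, a v * (1 + lam * ctx.γ v) = ctx.ev (ctx.hvec v) t := by
      intro v
      have h1 : HasSum (fun u => (innerSL ℝ (ctx.hvec v)) (a u • ctx.hvec u))
          ((innerSL ℝ (ctx.hvec v)) (ctx.K t)) := hexp.mapL _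
      have h2 : HasSum (fun u => if u = v then a v * (1 + lam * ctx.γ v) else 0)
          ((innerSL ℝ (ctx.hvec v)) (ctx.K t)) := by
        refine h1.congr_fun fun u => ?_
        show (if u = v then a v * (1 + lam * ctx.γ v) else 0)
            = (inner ℝ (ctx.hvec v) (a u • ctx.hvec u) : ℝ)
        rw [real_inner_smul_right, hpair]
        by_cases h : u = v
        · subst h; simp
        · simp [h, Ne.symm h]
      have h3 := h2.unique (hasSum_ite_eq v _)
      have h4 : (innerSL ℝ (ctx.hvec v)) (ctx.K t) = ctx.ev (ctx.hvec v) t := by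
        show (inner ℝ (ctx.hvec v) (ctx.K t) : ℝ) = _
        rw [real_inner_comm]; exact hrep _
      rw [← h3, h4]
    have hCh0 : (0:ℝ) ≤ ctx.Ch :=
      le_trans (abs_nonneg _) (ctx.hvec_bound 0 t ht)
    -- the norm-squared series
    have hnorm : HasSum (fun v => a v * ctx.ev (ctx.hvec v) t) (‖ctx.K t‖ ^ 2) := by
      have h1 : HasSum (fun v => (innerSL ℝ (ctx.K t)) (a v • ctx.hvec v))
          ((innerSL ℝ (ctx.K t)) (ctx.K t)) := hexp.mapL _
      have h2 : (innerSL ℝ (ctx.K t)) (ctx.K t) = ‖ctx.K t‖ ^ 2 :=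
        real_inner_self_eq_norm_sq _
      rw [h2] at h1
      refine h1.congr_fun fun v => ?_
      show a v * ctx.ev (ctx.hvec v) t = (inner ℝ (ctx.K t) (a v • ctx.hvec v) : ℝ)
      rw [real_inner_smul_right, hrep]
    rw [← hnorm.tsum_eq]
    refine Summable.tsum_le_tsum (fun v => ?_) hnorm.summable hb
    have hvge : lam * (c₀ * ((v : ℝ) + 1) ^ (2 * m)) ≤ lam * ctx.γ v :=
      mul_le_mul_of_nonneg_left (hγ v) hlam.le
    have hvpos : (0:ℝ) < lam * (c₀ * ((v : ℝ) + 1) ^ (2 * m)) := by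
      have := hpow v; positivity
    have hav' : a v = ctx.ev (ctx.hvec v) t / (1 + lam * ctx.γ v) := by
      rw [eq_div_iff (hden v).ne']
      exact hav v
    have habs : |ctx.ev (ctx.hvec v) t| ≤ ctx.Ch := ctx.hvec_bound v t ht
    have hsq : ctx.ev (ctx.hvec v) t ^ 2 ≤ ctx.Ch ^ 2 := by
      have := sq_abs (ctx.ev (ctx.hvec v) t)
      nlinarith [abs_nonneg (ctx.ev (ctx.hvec v) t)]
    rw [hav', div_mul_eq_mul_div, ← sq]
    rw [hb_def]
    refine div_le_div₀ (by positivity) hsq (by linarith) ?_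
    calc lam * (c₀ * ((v : ℝ) + 1) ^ (2 * m)) ≤ lam * ctx.γ v := hvge
      _ ≤ 1 + lam * ctx.γ v := by linarith
  have hBnn : (0:ℝ) ≤ ∑' v, b v :=
    le_trans (sq_nonneg _) (hKbound 0 (by norm_num))
  set M : ℝ := Real.sqrt (∑' v, b v) with hM_def
  have hKM : ∀ t ∈ Set.Icc (0:ℝ) 1, ‖ctx.K t‖ ≤ M := by
    intro t ht
    rw [hM_def]
    exact (Real.le_sqrt (norm_nonneg _) hBnn).2 (hKbound t ht)
  have hMnn : 0 ≤ M := Real.sqrt_nonneg _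
  -- evaluation via the kernel
  have hev : ∀ f : H, ∀ ω, ctx.ev f (T ω) = ⟪ctx.K (T ω), f⟫ :=
    fun f ω => (ctx.reproducing _ (hTr ω) f).symm
  -- measurability
  have hmeas : AEStronglyMeasurable (fun ω => ctx.ev g (T ω) • ctx.K (T ω)) P := by
    have hKT : Measurable fun ω => ctx.K (T ω) := hK.comp hT
    have h1 : Measurable fun ω => ctx.ev g (T ω) := by
      simp only [hev g]
      exact hKT.inner measurable_const
    exact (h1.smul hKT).aestronglyMeasurable
  -- integrability
  have hInt : Integrable (fun ω => ctx.ev g (T ω) • ctx.K (T ω)) P := by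
    refine (integrable_const (M * ‖g‖ * M)).mono' hmeas
      (Filter.Eventually.of_forall fun ω => ?_)
    have h1 : ‖ctx.K (T ω)‖ ≤ M := hKM _ (hTr ω)
    have h2 : |ctx.ev g (T ω)| ≤ M * ‖g‖ := by
      rw [hev g ω]
      calc |⟪ctx.K (T ω), g⟫| ≤ ‖ctx.K (T ω)‖ * ‖g‖ := abs_real_inner_le_norm _ _
        _ ≤ M * ‖g‖ := by
            exact mul_le_mul_of_nonneg_right h1 (norm_nonneg _)
    rw [norm_smul, Real.norm_eq_abs]
    calc |ctx.ev g (T ω)| * ‖ctx.K (T ω)‖ ≤ (M * ‖g‖) * M := by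
          exact mul_le_mul h2 h1 (norm_nonneg _) (by positivity)
      _ = M * ‖g‖ * M := rfl
  refine ⟨hInt, ?_⟩
  -- the identity, proved by testing against all f
  refine ext_inner_left ℝ fun f => ?_
  have h1 : ∀ ω, (inner ℝ f (ctx.ev g (T ω) • ctx.K (T ω)) : ℝ)
      = ctx.ev f (T ω) * ctx.ev g (T ω) := by
    intro ω
    rw [real_inner_smul_right, real_inner_comm, ← hev f ω]
    ring
  have h2 : (inner ℝ f (∫ ω, ctx.ev g (T ω) • ctx.K (T ω) ∂P) : ℝ) = ctx.V f g := by
    rw [← integral_inner hInt f, hV f g]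
    exact integral_congr_ae (Filter.Eventually.of_forall h1)
  have h3 : (inner ℝ f (ctx.W g) : ℝ) = lam * ctx.J f g := by
    rw [real_inner_comm, ctx.W_spec, ctx.J_symm]
  rw [inner_add_right, h2, h3, ctx.inner_eq]
end
end

section
/- Define S_λ(f) = −𝔼[(Y − f(T)) K_T] + W_λ f for f ∈ ℋ (the expectation is an ℋ-valued Bochner integral). Then S_λ(f) = (f − μ) + W_λ μ for every f ∈ ℋ. Consequently, f_λ := μ − W_λ μ = (id − W_λ)μ is the unique element of ℋ with S_λ(f_λ) = 0, and it satisfies ‖μ − f_λ‖ = ‖W_λ μ‖ ≤ (λ J(μ, μ))^{1/2} = h^m J(μ, μ)^{1/2} ≤ h^m (J(μ, μ) + 1)^{1/2}. -/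
open scoped RealInnerProductSpace
open MeasureTheory

noncomputable section

lemma RKHS_bound
    {m lam : ℝ} (hm : 1/2 < m) (hlam : 0 < lam)
    {H : Type*} [NormedAddCommGroup H] [InnerProductSpace ℝ H] [CompleteSpace H]
    (ctx : RKHSContext lam H)
    {c₀ : ℝ} (hc₀ : 0 < c₀)
    (hγ : ∀ v : ℕ, c₀ * ((v : ℝ) + 1) ^ (2 * m) ≤ ctx.γ v) :
    ∃ C : ℝ, 0 ≤ C ∧ (∀ t ∈ Set.Icc (0:ℝ) 1, ‖ctx.K t‖ ≤ C)
      ∧ TopologicalSpace.SeparableSpace H := by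
  classical
  set s : ℕ → ℝ := fun v => Real.sqrt (1 + lam * ctx.γ v) with hs_def
  have hpos : ∀ v, (0:ℝ) < 1 + lam * ctx.γ v := fun v => by
    have := ctx.γ_pos v; nlinarith
  have hs_pos : ∀ v, 0 < s v := fun v => Real.sqrt_pos.mpr (hpos v)
  have hs_sq : ∀ v, s v * s v = 1 + lam * ctx.γ v := fun v =>
    Real.mul_self_sqrt (hpos v).le
  set e : ℕ → H := fun v => (s v)⁻¹ • ctx.hvec v with he_def
  have hinner : ∀ u v, ⟪ctx.hvec u, ctx.hvec v⟫ = if u = v then 1 + lam * ctx.γ u else 0 := by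
    intro u v
    rw [ctx.inner_eq, ctx.V_orth, ctx.J_orth]
    split_ifs <;> ring
  have hon : Orthonormal ℝ e := by
    rw [orthonormal_iff_ite]
    intro u v
    simp only [he_def, real_inner_smul_left, real_inner_smul_right, hinner]
    split_ifs with h
    · subst h
      field_simp
      rw [sq, hs_sq u, div_self (hpos u).ne']
    · ring
  have hvec_eq : ∀ v, ctx.hvec v = s v • e v := by
    intro v
    rw [he_def]
    simp [smul_smul, mul_inv_cancel₀ (hs_pos v).ne']
  have hsp : ⊤ ≤ (Submodule.span ℝ (Set.range e)).topologicalClosure := by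
    intro g _
    rw [← SetLike.mem_coe, Submodule.topologicalClosure_coe]
    refine mem_closure_of_tendsto (ctx.expansion g) (Filter.Eventually.of_forall ?_)
    intro F
    rw [SetLike.mem_coe]
    refine Submodule.sum_mem _ (fun v _ => ?_)
    rw [hvec_eq v, smul_smul]
    exact Submodule.smul_mem _ _ (Submodule.subset_span ⟨v, rfl⟩)
  have hsep : TopologicalSpace.SeparableSpace H := by
    rw [← TopologicalSpace.isSeparable_univ_iff]
    have h1 : TopologicalSpace.IsSeparable (Set.range e) :=
      (Set.countable_range e).isSeparable
    have h2 := h1.span (R := ℝ)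
    have h3 := h2.closure
    refine h3.mono ?_
    intro g _
    have := hsp (Set.mem_univ g : g ∈ (⊤ : Submodule ℝ H))
    rwa [← SetLike.mem_coe, Submodule.topologicalClosure_coe] at this
  set b : HilbertBasis ℕ ℝ H := HilbertBasis.mk hon hsp with hb_def
  have hb : ⇑b = e := HilbertBasis.coe_mk hon hsp
  set Ch' : ℝ := max ctx.Ch 0 with hCh'
  have hCh'_nonneg : 0 ≤ Ch' := le_max_right _ _
  have hSum : Summable (fun v : ℕ => (1 + lam * ctx.γ v)⁻¹) := by
    have hbase : Summable (fun n : ℕ => 1 / (n:ℝ) ^ (2*m)) :=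
      Real.summable_one_div_nat_rpow.mpr (by linarith)
    have hbase' : Summable (fun n : ℕ => 1 / ((n:ℝ)+1) ^ (2*m)) := by
      have := (summable_nat_add_iff 1).mpr hbase
      simpa using this
    refine Summable.of_nonneg_of_le (fun v => inv_nonneg.mpr (hpos v).le)
      (fun v => ?_) (hbase'.mul_left (lam * c₀)⁻¹)
    have h1 : lam * (c₀ * ((v:ℝ)+1) ^ (2*m)) ≤ 1 + lam * ctx.γ v := by
      have := hγ v
      nlinarith [Real.rpow_pos_of_pos (by positivity : (0:ℝ) < (v:ℝ)+1) (2*m)]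
    have hp : (0:ℝ) < lam * (c₀ * ((v:ℝ)+1) ^ (2*m)) := by
      have hr : (0:ℝ) < ((v:ℝ)+1) ^ (2*m) := Real.rpow_pos_of_pos (by positivity) _
      positivity
    calc (1 + lam * ctx.γ v)⁻¹ ≤ (lam * (c₀ * ((v:ℝ)+1) ^ (2*m)))⁻¹ :=
          inv_anti₀ hp h1
      _ = (lam * c₀)⁻¹ * (1 / ((v:ℝ)+1) ^ (2*m)) := by
          rw [one_div, ← mul_inv]; ring_nf
  refine ⟨Real.sqrt (Ch' ^ 2 * ∑' v, (1 + lam * ctx.γ v)⁻¹), Real.sqrt_nonneg _, ?_, hsep⟩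
  intro t ht
  have hC0 : (0:ℝ) ≤ Ch' ^ 2 * ∑' v, (1 + lam * ctx.γ v)⁻¹ :=
    mul_nonneg (sq_nonneg _) (tsum_nonneg fun v => inv_nonneg.mpr (hpos v).le)
  rw [show (Real.sqrt (Ch' ^ 2 * ∑' v, (1 + lam * ctx.γ v)⁻¹)) = _ from rfl,
    Real.le_sqrt (norm_nonneg _)]
  have hparse : HasSum (fun v => ⟪ctx.K t, b v⟫ * ⟪b v, ctx.K t⟫) (‖ctx.K t‖ ^ 2) := by
    have := b.hasSum_inner_mul_inner (ctx.K t) (ctx.K t)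
    rwa [real_inner_self_eq_norm_sq] at this
  have hterm : ∀ v, ⟪ctx.K t, b v⟫ * ⟪b v, ctx.K t⟫ ≤ Ch' ^ 2 * (1 + lam * ctx.γ v)⁻¹ := by
    intro v
    have h1 : ⟪ctx.K t, b v⟫ = (s v)⁻¹ * ctx.ev (ctx.hvec v) t := by
      rw [hb, he_def]
      simp only [real_inner_smul_right]
      rw [ctx.reproducing t ht]
    have h2 : ⟪b v, ctx.K t⟫ = ⟪ctx.K t, b v⟫ := real_inner_comm _ _
    rw [h2, h1]
    have hb' : |ctx.ev (ctx.hvec v) t| ≤ Ch' := (ctx.hvec_bound v t ht).trans (le_max_left _ _)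
    have : ((s v)⁻¹ * ctx.ev (ctx.hvec v) t) * ((s v)⁻¹ * ctx.ev (ctx.hvec v) t)
        = (ctx.ev (ctx.hvec v) t)^2 * (1 + lam * ctx.γ v)⁻¹ := by
      rw [← hs_sq v]
      field_simp
    rw [this]
    have h3 : (ctx.ev (ctx.hvec v) t)^2 ≤ Ch' ^ 2 := by
      rw [← sq_abs]
      exact pow_le_pow_left₀ (abs_nonneg _) hb' 2
    exact mul_le_mul_of_nonneg_right h3 (inv_nonneg.mpr (hpos v).le)
  calc ‖ctx.K t‖ ^ 2 = ∑' v, ⟪ctx.K t, b v⟫ * ⟪b v, ctx.K t⟫ := hparse.tsum_eq.symm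
    _ ≤ ∑' v, Ch' ^ 2 * (1 + lam * ctx.γ v)⁻¹ :=
        hparse.summable.tsum_le_tsum hterm (hSum.mul_left _)
    _ = Ch' ^ 2 * ∑' v, (1 + lam * ctx.γ v)⁻¹ := tsum_mul_left
  
  exact hC0

lemma bilin_cs {H : Type*} [NormedAddCommGroup H] [InnerProductSpace ℝ H]
    (J : H →ₗ[ℝ] H →ₗ[ℝ] ℝ) (Jsymm : ∀ f g, J f g = J g f) (Jnn : ∀ f, 0 ≤ J f f)
    (f g : H) : (J f g) ^ 2 ≤ J f f * J g g := by
  have h : ∀ x : ℝ, 0 ≤ J g g * (x * x) + (2 * J f g) * x + J f f := by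
    intro x
    have h0 := Jnn (f + x • g)
    simp only [map_add, _root_.map_smul, LinearMap.add_apply, LinearMap.smul_apply,
      smul_eq_mul] at h0
    rw [Jsymm g f] at h0
    ring_nf at h0 ⊢
    linarith
  have hd := discrim_le_zero h
  rw [discrim] at hd
  nlinarith

/-- With `S_λ(f) = −𝔼[(Y − f(T)) K_T] + W_λ f`, one has
`S_λ(f) = (f − μ) + W_λ μ` for every `f ∈ ℋ`; consequently `f_λ := μ − W_λ μ` is the
unique zero of `S_λ`, and `‖μ − f_λ‖ = ‖W_λ μ‖ ≤ (λ J(μ,μ))^{1/2} = h^m J(μ,μ)^{1/2}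
≤ h^m (J(μ,μ)+1)^{1/2}`. -/
theorem population_score_and_bias_bound
    (m lam : ℝ) (hm : 1/2 < m) (hlam : 0 < lam)
    {H : Type*} [NormedAddCommGroup H] [InnerProductSpace ℝ H] [CompleteSpace H]
    [MeasurableSpace H] [BorelSpace H]
    (ctx : RKHSContext lam H)
    (c₀ : ℝ) (hc₀ : 0 < c₀)
    (hγ : ∀ v : ℕ, c₀ * ((v : ℝ) + 1) ^ (2 * m) ≤ ctx.γ v)
    {Ω : Type*} [MeasurableSpace Ω] (P : Measure Ω) [IsProbabilityMeasure P]
    (T : Ω → ℝ) (hT : Measurable T) (hTr : ∀ ω, T ω ∈ Set.Icc (0:ℝ) 1)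
    (hV : ∀ f g : H, ctx.V f g = ∫ ω, ctx.ev f (T ω) * ctx.ev g (T ω) ∂P)
    (hK : Measurable ctx.K)
    (Y : Ω → ℝ) (hY : MemLp Y 2 P)
    (mu : H)
    (hcond : P[Y | MeasurableSpace.comap T (inferInstance : MeasurableSpace ℝ)]
        =ᵐ[P] fun ω => ctx.ev mu (T ω)) :
    (∀ f : H, Integrable (fun ω => (Y ω - ctx.ev f (T ω)) • ctx.K (T ω)) P) ∧
    (∀ f : H,
      (-(∫ ω, (Y ω - ctx.ev f (T ω)) • ctx.K (T ω) ∂P)) + ctx.W f = (f - mu) + ctx.W mu) ∧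
    ((-(∫ ω, (Y ω - ctx.ev (mu - ctx.W mu) (T ω)) • ctx.K (T ω) ∂P))
        + ctx.W (mu - ctx.W mu) = 0) ∧
    (∀ f : H,
      (-(∫ ω, (Y ω - ctx.ev f (T ω)) • ctx.K (T ω) ∂P)) + ctx.W f = 0 → f = mu - ctx.W mu) ∧
    ‖mu - (mu - ctx.W mu)‖ = ‖ctx.W mu‖ ∧
    ‖ctx.W mu‖ ≤ Real.sqrt (lam * ctx.J mu mu) ∧
    Real.sqrt (lam * ctx.J mu mu) = (lam ^ (1/(2*m))) ^ m * Real.sqrt (ctx.J mu mu) ∧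
    (lam ^ (1/(2*m))) ^ m * Real.sqrt (ctx.J mu mu)
      ≤ (lam ^ (1/(2*m))) ^ m * Real.sqrt (ctx.J mu mu + 1) := by
  obtain ⟨C, hC0, hCK, hsep⟩ := RKHS_bound hm hlam ctx hc₀ hγ
  haveI : TopologicalSpace.SeparableSpace H := hsep
  haveI : SecondCountableTopology H := UniformSpace.secondCountable_of_separable H
  have hevK : ∀ (f : H) (ω : Ω), ctx.ev f (T ω) = ⟪ctx.K (T ω), f⟫ :=
    fun f ω => (ctx.reproducing _ (hTr ω) f).symm
  have hKT_meas : Measurable (fun ω => ctx.K (T ω)) := hK.comp hT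
  have hev_meas : ∀ f : H, Measurable (fun ω => ctx.ev f (T ω)) := by
    intro f
    have h1 : Measurable (fun ω => ⟪ctx.K (T ω), f⟫) := hKT_meas.inner measurable_const
    have : (fun ω => ctx.ev f (T ω)) = fun ω => ⟪ctx.K (T ω), f⟫ := funext fun ω => hevK f ω
    rw [this]; exact h1
  have hev_bound : ∀ (f : H) (ω : Ω), |ctx.ev f (T ω)| ≤ C * ‖f‖ := by
    intro f ω
    rw [hevK]
    calc |⟪ctx.K (T ω), f⟫| ≤ ‖ctx.K (T ω)‖ * ‖f‖ := abs_real_inner_le_norm _ _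
      _ ≤ C * ‖f‖ := mul_le_mul_of_nonneg_right (hCK _ (hTr ω)) (norm_nonneg f)
  have hY1 : Integrable Y P := hY.integrable one_le_two
  have hint_evY : ∀ g : H, Integrable (fun ω => ctx.ev g (T ω) * Y ω) P := fun g =>
    hY1.bdd_mul (hev_meas g).aestronglyMeasurable
      (Filter.Eventually.of_forall fun ω => by
        rw [Real.norm_eq_abs]; exact hev_bound g ω)
  have hev_int : ∀ g : H, Integrable (fun ω => ctx.ev g (T ω)) P := fun g =>
    Integrable.mono' (integrable_const (C * ‖g‖)) (hev_meas g).aestronglyMeasurable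
      (Filter.Eventually.of_forall fun ω => by
        rw [Real.norm_eq_abs]; exact hev_bound g ω)
  have hprod_int : ∀ f g : H, Integrable (fun ω => ctx.ev f (T ω) * ctx.ev g (T ω)) P :=
    fun f g =>
    (hev_int g).bdd_mul (hev_meas f).aestronglyMeasurable
      (Filter.Eventually.of_forall fun ω => by
        rw [Real.norm_eq_abs]; exact hev_bound f ω)
  -- conditional expectation step
  have hYev : ∀ g : H, ∫ ω, ctx.ev g (T ω) * Y ω ∂P = ctx.V g mu := by
    intro g
    have hmle : MeasurableSpace.comap T (inferInstance : MeasurableSpace ℝ)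
        ≤ _ := hT.comap_le
    haveI : SigmaFinite (P.trim hmle) := by
      have : IsFiniteMeasure (P.trim hmle) := isFiniteMeasure_trim hmle
      infer_instance
    have hf_sm : StronglyMeasurable[MeasurableSpace.comap T (inferInstance : MeasurableSpace ℝ)] (fun ω => ctx.ev g (T ω)) := by
      have hφ : Measurable fun t : ℝ => ⟪ctx.K t, g⟫ := hK.inner measurable_const
      have hTm : Measurable[MeasurableSpace.comap T (inferInstance : MeasurableSpace ℝ)] T := Measurable.of_comap_le le_rfl
      have h1 : Measurable[MeasurableSpace.comap T (inferInstance : MeasurableSpace ℝ)] fun ω => ⟪ctx.K (T ω), g⟫ := hφ.comp hTm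
      have h2 : (fun ω => ctx.ev g (T ω)) = fun ω => ⟪ctx.K (T ω), g⟫ :=
        funext fun ω => hevK g ω
      rw [h2]
      exact h1.stronglyMeasurable
    have hmul := condExp_stronglyMeasurable_mul_of_bound hmle hf_sm hY1 (C * ‖g‖)
      (Filter.Eventually.of_forall fun ω => by
        rw [Real.norm_eq_abs]; exact hev_bound g ω)
    calc ∫ ω, ctx.ev g (T ω) * Y ω ∂P
        = ∫ ω, ((fun ω => ctx.ev g (T ω)) * Y) ω ∂P := by simp only [Pi.mul_apply]
      _ = ∫ ω, (P[(fun ω => ctx.ev g (T ω)) * Y|MeasurableSpace.comap T (inferInstance : MeasurableSpace ℝ)]) ω ∂P := (integral_condExp hmle).symm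
      _ = ∫ ω, ((fun ω => ctx.ev g (T ω)) * P[Y|MeasurableSpace.comap T (inferInstance : MeasurableSpace ℝ)]) ω ∂P := integral_congr_ae hmul
      _ = ∫ ω, ctx.ev g (T ω) * ctx.ev mu (T ω) ∂P := by
          refine integral_congr_ae ?_
          filter_upwards [hcond] with ω hω
          simp only [Pi.mul_apply]
          rw [hω]
      _ = ctx.V g mu := (hV g mu).symm
  -- integrability of the score integrand
  have hF_int : ∀ f : H, Integrable (fun ω => (Y ω - ctx.ev f (T ω)) • ctx.K (T ω)) P := by
    intro f
    have hsm : AEStronglyMeasurable (fun ω => (Y ω - ctx.ev f (T ω)) • ctx.K (T ω)) P :=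
      ((hY1.aestronglyMeasurable.sub (hev_meas f).aestronglyMeasurable)).smul
        hKT_meas.aestronglyMeasurable
    refine Integrable.mono' ((hY1.abs.add (integrable_const (C * ‖f‖))).mul_const C) hsm
      (Filter.Eventually.of_forall fun ω => ?_)
    rw [norm_smul, Real.norm_eq_abs]
    have h1 : |Y ω - ctx.ev f (T ω)| ≤ |Y ω| + C * ‖f‖ := by
      calc |Y ω - ctx.ev f (T ω)| ≤ |Y ω| + |ctx.ev f (T ω)| := abs_sub _ _
        _ ≤ |Y ω| + C * ‖f‖ := by linarith [hev_bound f ω]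
    exact mul_le_mul h1 (hCK _ (hTr ω)) (norm_nonneg _)
      (add_nonneg (abs_nonneg _) (mul_nonneg hC0 (norm_nonneg _)))
  -- the key identity
  have hkey : ∀ f : H,
      ∫ ω, (Y ω - ctx.ev f (T ω)) • ctx.K (T ω) ∂P = (mu - f) - ctx.W (mu - f) := by
    intro f
    refine ext_inner_left ℝ (fun g => ?_)
    have hptw : ∀ ω, ⟪g, (Y ω - ctx.ev f (T ω)) • ctx.K (T ω)⟫
        = ctx.ev g (T ω) * Y ω - ctx.ev f (T ω) * ctx.ev g (T ω) := by
      intro ω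
      rw [real_inner_smul_right, real_inner_comm, ctx.reproducing _ (hTr ω)]
      ring
    have hL : ⟪g, ∫ ω, (Y ω - ctx.ev f (T ω)) • ctx.K (T ω) ∂P⟫
        = ctx.V mu g - ctx.V f g := by
      rw [← integral_inner (hF_int f) g]
      calc ∫ ω, ⟪g, (Y ω - ctx.ev f (T ω)) • ctx.K (T ω)⟫ ∂P
          = ∫ ω, (ctx.ev g (T ω) * Y ω - ctx.ev f (T ω) * ctx.ev g (T ω)) ∂P := by
            simp_rw [hptw]
        _ = (∫ ω, ctx.ev g (T ω) * Y ω ∂P) - ∫ ω, ctx.ev f (T ω) * ctx.ev g (T ω) ∂P :=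
            integral_sub (hint_evY g) (hprod_int f g)
        _ = ctx.V mu g - ctx.V f g := by rw [hYev g, ← hV, ctx.V_symm g mu]
    have hR : ⟪g, (mu - f) - ctx.W (mu - f)⟫ = ctx.V mu g - ctx.V f g := by
      rw [real_inner_comm, inner_sub_left, ctx.inner_eq, ctx.W_spec]
      simp only [map_sub, LinearMap.sub_apply]
      ring
    rw [hL, hR]
  have hconc2 : ∀ f : H,
      (-(∫ ω, (Y ω - ctx.ev f (T ω)) • ctx.K (T ω) ∂P)) + ctx.W f
        = (f - mu) + ctx.W mu := by
    intro f
    rw [hkey f, map_sub]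
    abel
  refine ⟨hF_int, hconc2, ?_, ?_, ?_, ?_, ?_, ?_⟩
  · rw [hconc2 (mu - ctx.W mu)]
    abel
  · intro f hf
    rw [hconc2 f] at hf
    have h2 : f - (mu - ctx.W mu) = (f - mu) + ctx.W mu := by abel
    exact sub_eq_zero.mp (h2.trans hf)
  · rw [sub_sub_cancel]
  · -- ‖W mu‖ ≤ sqrt (lam * J mu mu)
    set w := ctx.W mu with hw_def
    have hcs := bilin_cs ctx.J ctx.J_symm ctx.J_nonneg mu w
    have h1 : ‖w‖ ^ 2 = lam * ctx.J mu w := by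
      rw [← real_inner_self_eq_norm_sq, hw_def]
      exact ctx.W_spec mu w
    have h2 : lam * ctx.J w w ≤ ‖w‖ ^ 2 := by
      have hVnn := ctx.V_nonneg w
      rw [← real_inner_self_eq_norm_sq, ctx.inner_eq]
      linarith
    have h3 : ctx.J mu w ≤ Real.sqrt (ctx.J mu mu) * Real.sqrt (ctx.J w w) := by
      calc ctx.J mu w ≤ |ctx.J mu w| := le_abs_self _
        _ = Real.sqrt ((ctx.J mu w) ^ 2) := (Real.sqrt_sq_eq_abs _).symm
        _ ≤ Real.sqrt (ctx.J mu mu * ctx.J w w) := Real.sqrt_le_sqrt hcs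
        _ = Real.sqrt (ctx.J mu mu) * Real.sqrt (ctx.J w w) :=
            Real.sqrt_mul (ctx.J_nonneg mu) _
    have h4 : Real.sqrt (lam * ctx.J w w) ≤ ‖w‖ := by
      have := Real.sqrt_le_sqrt h2
      rwa [Real.sqrt_sq (norm_nonneg w)] at this
    have h5 : ‖w‖ ^ 2 ≤ Real.sqrt (lam * ctx.J mu mu) * Real.sqrt (lam * ctx.J w w) := by
      rw [h1, Real.sqrt_mul hlam.le, Real.sqrt_mul hlam.le,
        show Real.sqrt lam * Real.sqrt (ctx.J mu mu) * (Real.sqrt lam * Real.sqrt (ctx.J w w))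
          = (Real.sqrt lam * Real.sqrt lam) * (Real.sqrt (ctx.J mu mu) * Real.sqrt (ctx.J w w))
          from by ring, Real.mul_self_sqrt hlam.le]
      exact mul_le_mul_of_nonneg_left h3 hlam.le
    by_cases hw : ‖w‖ = 0
    · rw [hw]; exact Real.sqrt_nonneg _
    · have hwpos : 0 < ‖w‖ := lt_of_le_of_ne (norm_nonneg _) (Ne.symm hw)
      have h6 : ‖w‖ * ‖w‖ ≤ Real.sqrt (lam * ctx.J mu mu) * ‖w‖ := by
        have h7 : ‖w‖ ^ 2 ≤ Real.sqrt (lam * ctx.J mu mu) * ‖w‖ :=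
          h5.trans (mul_le_mul_of_nonneg_left h4 (Real.sqrt_nonneg _))
        nlinarith
      exact le_of_mul_le_mul_right h6 hwpos
  · -- sqrt (lam * J mu mu) = (lam^(1/(2m)))^m * sqrt (J mu mu)
    have hm0 : m ≠ 0 := ne_of_gt (by linarith)
    have hpow : (lam ^ (1/(2*m))) ^ m = Real.sqrt lam := by
      rw [← Real.rpow_mul hlam.le]
      have : (1/(2*m)) * m = 1/2 := by field_simp
      rw [this, ← Real.sqrt_eq_rpow]
    rw [hpow, Real.sqrt_mul hlam.le]
  · exact mul_le_mul_of_nonneg_left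
      (Real.sqrt_le_sqrt (by linarith [ctx.J_nonneg mu]))
      (by positivity)
end
end

section
/- If Σ_{v=1}^∞ V(μ, h_v)² γ_v² < ∞ for μ ∈ ℋ, then for every t ∈ [0,1], |(W_λ μ)(t)| ≤ λ C_h (Σ_v V(μ, h_v)² γ_v²)^{1/2} (Σ_v (1 + λγ_v)^{-2})^{1/2}; in particular there is a constant C, depending only on m, c₀ and C_h, such that sup_{t∈[0,1]} |(W_λ μ)(t)| ≤ C h^{2m − 1/2} (Σ_v V(μ, h_v)² γ_v²)^{1/2}. -/
open scoped RealInnerProductSpace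
open MeasureTheory

noncomputable section

section Aux

/-- Tail bound `∑_{i≥0} 1/(i+N+1)² ≤ 1/N` for `N ≥ 1`, by telescoping. -/
lemma aux_tail (N : ℕ) (hN : 1 ≤ N) :
    Summable (fun i : ℕ => (((i : ℝ) + N + 1)^2)⁻¹) ∧
      ∑' i : ℕ, (((i : ℝ) + N + 1)^2)⁻¹ ≤ ((N : ℝ))⁻¹ := by
  have hN' : (1:ℝ) ≤ (N : ℝ) := by exact_mod_cast hN
  set T : ℕ → ℝ := fun i => ((N:ℝ) + i)⁻¹ with hT
  have key : ∀ i : ℕ, (((i : ℝ) + N + 1)^2)⁻¹ ≤ T i - T (i+1) := by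
    intro i
    have hi : (0:ℝ) ≤ (i:ℝ) := Nat.cast_nonneg i
    have h0 : (0:ℝ) < (N:ℝ) + i := by linarith
    have h1 : (0:ℝ) < (N:ℝ) + i + 1 := by linarith
    have hTd : T i - T (i+1) = (((N:ℝ)+i) * ((N:ℝ)+i+1))⁻¹ := by
      simp only [hT]
      push_cast
      rw [inv_sub_inv h0.ne' (by linarith : ((N:ℝ) + ((i:ℝ)+1)) ≠ 0)]
      rw [show ((N:ℝ) + ((i:ℝ)+1)) - ((N:ℝ) + (i:ℝ)) = 1 by ring, one_div]
      ring_nf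
    rw [hTd]
    have h2 : ((N:ℝ)+i) * ((N:ℝ)+i+1) ≤ ((i:ℝ) + N + 1)^2 := by nlinarith
    exact inv_anti₀ (by positivity) h2
  have hpartial : ∀ K : ℕ, ∑ i ∈ Finset.range K, (((i : ℝ) + N + 1)^2)⁻¹ ≤ ((N : ℝ))⁻¹ := by
    intro K
    calc ∑ i ∈ Finset.range K, (((i : ℝ) + N + 1)^2)⁻¹
        ≤ ∑ i ∈ Finset.range K, (T i - T (i+1)) := Finset.sum_le_sum (fun i _ => key i)
      _ = T 0 - T K := Finset.sum_range_sub' T K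
      _ ≤ T 0 := by
          have hTK : 0 ≤ T K := by
            have : (0:ℝ) ≤ (K:ℝ) := Nat.cast_nonneg K
            simp only [hT]; positivity
          linarith
      _ = ((N : ℝ))⁻¹ := by simp [hT]
  have hsum : Summable (fun i : ℕ => (((i : ℝ) + N + 1)^2)⁻¹) :=
    summable_of_sum_range_le (fun n => by positivity) hpartial
  refine ⟨hsum, Summable.tsum_le_of_sum_le hsum fun s => ?_⟩
  obtain ⟨K, hK⟩ := s.exists_nat_subset_range
  exact le_trans (Finset.sum_le_sum_of_subset_of_nonneg hK (fun i _ _ => by positivity))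
    (hpartial K)

/-- `∑ 1/(n+1)² ≤ 2`. -/
lemma aux_s2 : Summable (fun n : ℕ => (((n : ℝ) + 1)^2)⁻¹) ∧
    ∑' n : ℕ, (((n : ℝ) + 1)^2)⁻¹ ≤ 2 := by
  obtain ⟨h1, h2⟩ := aux_tail 1 le_rfl
  have hshift : (fun i : ℕ => ((((i + 1 : ℕ) : ℝ) + 1)^2)⁻¹)
      = fun i : ℕ => (((i : ℝ) + (1:ℕ) + 1)^2)⁻¹ := by
    funext i; push_cast; ring_nf
  have hsum : Summable (fun n : ℕ => (((n : ℝ) + 1)^2)⁻¹) := by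
    rw [← summable_nat_add_iff 1]
    simpa [hshift] using h1
  refine ⟨hsum, ?_⟩
  have hsplit := Summable.sum_add_tsum_nat_add 1 hsum
    (f := fun n : ℕ => (((n : ℝ) + 1)^2)⁻¹)
  rw [← hsplit]
  have htail : ∑' i : ℕ, ((((i + 1 : ℕ) : ℝ) + 1)^2)⁻¹ ≤ 1 := by
    rw [hshift]
    simpa using h2
  have hhead : ∑ i ∈ Finset.range 1, (((i : ℝ) + 1)^2)⁻¹ = 1 := by norm_num
  rw [hhead]
  linarith

/-- Cauchy–Schwarz for nonnegative series. -/
lemma aux_CS (x y : ℕ → ℝ) (hx : ∀ n, 0 ≤ x n) (hy : ∀ n, 0 ≤ y n)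
    (hx2 : Summable (fun n => x n ^ 2)) (hy2 : Summable (fun n => y n ^ 2)) :
    Summable (fun n => x n * y n) ∧
      ∑' n, x n * y n ≤ Real.sqrt (∑' n, x n ^ 2) * Real.sqrt (∑' n, y n ^ 2) := by
  have hxy : Summable (fun n => x n * y n) := by
    refine Summable.of_nonneg_of_le (fun n => mul_nonneg (hx n) (hy n))
      (fun n => ?_) ((hx2.add hy2).div_const 2)
    nlinarith [sq_nonneg (x n - y n)]
  refine ⟨hxy, Summable.tsum_le_of_sum_le hxy fun s => ?_⟩
  have h1 : (∑ i ∈ s, x i * y i)^2 ≤ (∑ i ∈ s, x i^2) * ∑ i ∈ s, y i^2 :=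
    Finset.sum_mul_sq_le_sq_mul_sq s x y
  have h2 : (∑ i ∈ s, x i^2) ≤ ∑' n, x n ^ 2 :=
    Summable.sum_le_tsum s (fun i _ => sq_nonneg _) hx2
  have h3 : (∑ i ∈ s, y i^2) ≤ ∑' n, y n ^ 2 :=
    Summable.sum_le_tsum s (fun i _ => sq_nonneg _) hy2
  have h4 : (∑ i ∈ s, x i * y i)^2 ≤ (∑' n, x n ^ 2) * ∑' n, y n ^ 2 := by
    calc (∑ i ∈ s, x i * y i)^2 ≤ (∑ i ∈ s, x i^2) * ∑ i ∈ s, y i^2 := h1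
      _ ≤ (∑' n, x n ^ 2) * ∑' n, y n ^ 2 := by
          apply mul_le_mul h2 h3 (Finset.sum_nonneg fun i _ => sq_nonneg _)
          exact tsum_nonneg fun n => sq_nonneg _
  have h5 : 0 ≤ ∑ i ∈ s, x i * y i := Finset.sum_nonneg fun i _ => mul_nonneg (hx i) (hy i)
  calc ∑ i ∈ s, x i * y i = Real.sqrt ((∑ i ∈ s, x i * y i)^2) := (Real.sqrt_sq h5).symm
    _ ≤ Real.sqrt ((∑' n, x n ^ 2) * ∑' n, y n ^ 2) := Real.sqrt_le_sqrt h4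
    _ = Real.sqrt (∑' n, x n ^ 2) * Real.sqrt (∑' n, y n ^ 2) :=
        Real.sqrt_mul (tsum_nonneg fun n => sq_nonneg _) _

/-- The key series estimate: if `0 ≤ g n ≤ min 1 (c / (h^q (n+1)^q))` with `q > 2`, then
`∑ g ≤ (2 + 2c)/h`. -/
lemma aux_series (q c h : ℝ) (hq : 2 < q) (hc : 0 ≤ c) (hh : 0 < h) (g : ℕ → ℝ)
    (hg0 : ∀ n, 0 ≤ g n) (hg1 : ∀ n, g n ≤ 1)
    (hg2 : ∀ n, g n ≤ c * (h ^ q * ((n:ℝ)+1) ^ q)⁻¹) :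
    Summable g ∧ ∑' n, g n ≤ (2 + 2*c) / h := by
  have hq2 : (0:ℝ) ≤ q - 2 := by linarith
  have hhq : 0 < h ^ q := Real.rpow_pos_of_pos hh q
  have hcomp : ∀ n : ℕ, g n ≤ (c * (h ^ q)⁻¹) * (((n:ℝ)+1)^2)⁻¹ := by
    intro n
    have hn0 : (0:ℝ) ≤ (n:ℝ) := Nat.cast_nonneg n
    have hn1 : (1:ℝ) ≤ (n:ℝ)+1 := by linarith
    have hr2 : ((n:ℝ)+1)^((2:ℕ):ℝ) = ((n:ℝ)+1)^2 := Real.rpow_natCast _ 2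
    have hrq : ((n:ℝ)+1)^2 ≤ ((n:ℝ)+1)^q := by
      rw [← hr2]
      exact Real.rpow_le_rpow_of_exponent_le hn1 (by push_cast; linarith)
    have h1 : (((n:ℝ)+1)^q)⁻¹ ≤ (((n:ℝ)+1)^2)⁻¹ :=
      inv_anti₀ (by positivity) hrq
    calc g n ≤ c * (h ^ q * ((n:ℝ)+1) ^ q)⁻¹ := hg2 n
      _ = (c * (h ^ q)⁻¹) * (((n:ℝ)+1)^q)⁻¹ := by rw [mul_inv]; ring
      _ ≤ (c * (h ^ q)⁻¹) * (((n:ℝ)+1)^2)⁻¹ :=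
          mul_le_mul_of_nonneg_left h1 (by positivity)
  have hsum : Summable g :=
    Summable.of_nonneg_of_le hg0 hcomp (aux_s2.1.mul_left _)
  refine ⟨hsum, ?_⟩
  rcases le_or_gt 1 h with hh1 | hh1
  · -- case h ≥ 1
    have h1 : ∑' n : ℕ, g n ≤ (c * (h ^ q)⁻¹) * ∑' n : ℕ, (((n:ℝ)+1)^2)⁻¹ := by
      rw [← tsum_mul_left]
      exact Summable.tsum_le_tsum hcomp hsum (aux_s2.1.mul_left _)
    have h2 : ∑' n, g n ≤ (c * (h ^ q)⁻¹) * 2 :=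
      le_trans h1 (mul_le_mul_of_nonneg_left aux_s2.2 (by positivity))
    have h3 : h ≤ h ^ q := by
      calc h = h ^ (1:ℝ) := (Real.rpow_one h).symm
        _ ≤ h ^ q := Real.rpow_le_rpow_of_exponent_le hh1 (by linarith)
    have h4 : (h ^ q)⁻¹ ≤ h⁻¹ := inv_anti₀ hh h3
    have hinv : (0:ℝ) ≤ h⁻¹ := by positivity
    calc ∑' n, g n ≤ (c * (h ^ q)⁻¹) * 2 := h2
      _ ≤ (c * h⁻¹) * 2 :=
          mul_le_mul_of_nonneg_right (mul_le_mul_of_nonneg_left h4 hc) (by norm_num)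
      _ ≤ (2 + 2*c) / h := by
          rw [div_eq_mul_inv]
          nlinarith
  · -- case h < 1
    set N : ℕ := ⌈h⁻¹⌉₊ with hNdef
    have hinv1 : (1:ℝ) ≤ h⁻¹ := (one_le_inv₀ hh).2 hh1.le
    have hN1 : 1 ≤ N := Nat.one_le_ceil_iff.2 (by linarith)
    have hNinv : h⁻¹ ≤ (N:ℝ) := Nat.le_ceil _
    have hN0 : (0:ℝ) < (N:ℝ) := by
      have : (1:ℝ) ≤ (N:ℝ) := by exact_mod_cast hN1
      linarith
    have hN2 : (N:ℝ) ≤ 2 * h⁻¹ := by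
      have := Nat.ceil_lt_add_one (show (0:ℝ) ≤ h⁻¹ by linarith)
      rw [hNdef]
      push_cast
      linarith
    have hNih : ((N:ℝ))⁻¹ ≤ h := by
      rw [inv_le_comm₀ hN0 hh]
      exact hNinv
    have hhead : ∑ i ∈ Finset.range N, g i ≤ 2 * h⁻¹ := by
      calc ∑ i ∈ Finset.range N, g i ≤ ∑ i ∈ Finset.range N, 1 :=
            Finset.sum_le_sum fun i _ => hg1 i
        _ = (N:ℝ) := by simp
        _ ≤ 2 * h⁻¹ := hN2
    obtain ⟨htail_sum, htail_bound⟩ := aux_tail N hN1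
    set Kc : ℝ := c * (h^q)⁻¹ * h^(q-2) with hKc
    have hKc0 : 0 ≤ Kc := by
      have := (Real.rpow_pos_of_pos hh (q-2)).le
      positivity
    have hterm : ∀ i : ℕ, g (i + N) ≤ Kc * (((i:ℝ) + N + 1)^2)⁻¹ := by
      intro i
      have hi : (0:ℝ) ≤ (i:ℝ) := Nat.cast_nonneg i
      have hx : (0:ℝ) < (i:ℝ) + N + 1 := by linarith
      have hxN : h⁻¹ ≤ (i:ℝ) + N + 1 := by linarith
      have hpow : (h⁻¹) ^ (q-2) ≤ ((i:ℝ) + N + 1) ^ (q-2) :=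
        Real.rpow_le_rpow (by positivity) hxN hq2
      have hinvpow : (h ^ (q-2))⁻¹ ≤ ((i:ℝ) + N + 1) ^ (q-2) := by
        rwa [Real.inv_rpow hh.le] at hpow
      have h5 : ((((i:ℝ) + N + 1)) ^ (q-2))⁻¹ ≤ h^(q-2) := by
        have hp0 : (0:ℝ) < (h ^ (q-2))⁻¹ := by
          have := Real.rpow_pos_of_pos hh (q-2); positivity
        have := inv_anti₀ hp0 hinvpow
        rwa [inv_inv] at this
      have hxq : ((i:ℝ) + N + 1) ^ q = ((i:ℝ) + N + 1) ^ (q-2) * ((i:ℝ) + N + 1)^2 := by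
        rw [show ((i:ℝ) + N + 1)^2 = ((i:ℝ) + N + 1)^((2:ℕ):ℝ) from (Real.rpow_natCast _ 2).symm,
          ← Real.rpow_add hx]
        norm_num
      have hkey : (((i:ℝ) + N + 1) ^ q)⁻¹ ≤ h^(q-2) * ((((i:ℝ) + N + 1))^2)⁻¹ := by
        rw [hxq, mul_inv]
        exact mul_le_mul_of_nonneg_right h5 (by positivity)
      have hcast : ((i + N : ℕ) : ℝ) + 1 = (i:ℝ) + N + 1 := by push_cast; ring
      calc g (i + N) ≤ c * (h ^ q * (((i + N : ℕ):ℝ)+1) ^ q)⁻¹ := hg2 (i + N)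
        _ = (c * (h ^ q)⁻¹) * ((((i:ℝ) + N + 1)) ^ q)⁻¹ := by rw [hcast, mul_inv]; ring
        _ ≤ (c * (h ^ q)⁻¹) * (h^(q-2) * ((((i:ℝ) + N + 1))^2)⁻¹) :=
            mul_le_mul_of_nonneg_left hkey (by positivity)
        _ = Kc * (((i:ℝ) + N + 1)^2)⁻¹ := by rw [hKc]; ring
    have htail : ∑' i : ℕ, g (i + N) ≤ Kc * ((N:ℝ))⁻¹ := by
      calc ∑' i : ℕ, g (i + N) ≤ ∑' i : ℕ, Kc * (((i:ℝ) + N + 1)^2)⁻¹ :=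
            Summable.tsum_le_tsum hterm ((summable_nat_add_iff N).2 hsum) (htail_sum.mul_left _)
        _ = Kc * ∑' i : ℕ, (((i:ℝ) + N + 1)^2)⁻¹ := tsum_mul_left
        _ ≤ Kc * ((N:ℝ))⁻¹ := mul_le_mul_of_nonneg_left htail_bound hKc0
    have hKch : Kc * h = c * h⁻¹ := by
      have e1 : h^(q-2) * h = h^(q-1) := by
        rw [← Real.rpow_add_one hh.ne' (q-2), show q-2+1 = q-1 by ring]
      have e2 : (h^q)⁻¹ * h^(q-1) = h⁻¹ := by
        rw [inv_mul_eq_div, ← Real.rpow_sub hh]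
        rw [show q - 1 - q = -1 by ring, Real.rpow_neg_one]
      calc Kc * h = c * ((h^q)⁻¹ * (h^(q-2) * h)) := by rw [hKc]; ring
        _ = c * ((h^q)⁻¹ * h^(q-1)) := by rw [e1]
        _ = c * h⁻¹ := by rw [e2]
    have htail' : ∑' i : ℕ, g (i + N) ≤ c * h⁻¹ := by
      calc ∑' i : ℕ, g (i + N) ≤ Kc * ((N:ℝ))⁻¹ := htail
        _ ≤ Kc * h := mul_le_mul_of_nonneg_left hNih hKc0
        _ = c * h⁻¹ := hKch
    have hsplit := Summable.sum_add_tsum_nat_add N hsum (f := g)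
    rw [← hsplit, div_eq_mul_inv]
    have hinv : (0:ℝ) ≤ h⁻¹ := by positivity
    nlinarith

end Aux

section Hilbert

variable {lam : ℝ} {H : Type} [NormedAddCommGroup H] [InnerProductSpace ℝ H]

lemma inner_hvec (ctx : RKHSContext lam H) (u v : ℕ) :
    ⟪ctx.hvec u, ctx.hvec v⟫ = if u = v then 1 + lam * ctx.γ u else 0 := by
  rw [ctx.inner_eq, ctx.V_orth, ctx.J_orth]
  by_cases h : u = v <;> simp [h]

lemma coeff_eq (ctx : RKHSContext lam H) (g : H) (v : ℕ) :
    ⟪g, ctx.hvec v⟫ = ctx.V g (ctx.hvec v) * (1 + lam * ctx.γ v) := by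
  have h1 := (ctx.expansion g).mapL (innerSL ℝ (ctx.hvec v))
  have key : ∀ u, (innerSL ℝ (ctx.hvec v)) (ctx.V g (ctx.hvec u) • ctx.hvec u)
      = if u = v then ctx.V g (ctx.hvec v) * (1 + lam * ctx.γ v) else 0 := by
    intro u
    have : (innerSL ℝ (ctx.hvec v)) (ctx.V g (ctx.hvec u) • ctx.hvec u)
        = ctx.V g (ctx.hvec u) * ⟪ctx.hvec v, ctx.hvec u⟫ := real_inner_smul_right _ _ _
    rw [this, inner_hvec]
    by_cases h : u = v
    · simp [h]
    · have h' : v ≠ u := fun e => h e.symm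
      simp [h, h']
  simp only [key] at h1
  have h2 := h1.unique (hasSum_ite_eq v (ctx.V g (ctx.hvec v) * (1 + lam * ctx.γ v)))
  rw [← h2]
  exact real_inner_comm _ _

lemma lamJ_eq (ctx : RKHSContext lam H) (g : H) (v : ℕ) :
    lam * ctx.J g (ctx.hvec v) = (lam * ctx.γ v) * ctx.V g (ctx.hvec v) := by
  have h1 := (ctx.expansion g).mapL (innerSL ℝ (ctx.W (ctx.hvec v)))
  have key : ∀ u, (innerSL ℝ (ctx.W (ctx.hvec v))) (ctx.V g (ctx.hvec u) • ctx.hvec u)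
      = if u = v then (lam * ctx.γ v) * ctx.V g (ctx.hvec v) else 0 := by
    intro u
    have h2 : (innerSL ℝ (ctx.W (ctx.hvec v))) (ctx.V g (ctx.hvec u) • ctx.hvec u)
        = ctx.V g (ctx.hvec u) * ⟪ctx.W (ctx.hvec v), ctx.hvec u⟫ := real_inner_smul_right _ _ _
    rw [h2, ctx.W_spec, ctx.J_orth]
    by_cases h : u = v
    · simp [h]; ring
    · have h' : v ≠ u := fun e => h e.symm
      simp [h, h']
  simp only [key] at h1
  have h2 := h1.unique (hasSum_ite_eq v ((lam * ctx.γ v) * ctx.V g (ctx.hvec v)))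
  have h3 : (innerSL ℝ (ctx.W (ctx.hvec v))) g = lam * ctx.J g (ctx.hvec v) := by
    have : (innerSL ℝ (ctx.W (ctx.hvec v))) g = ⟪ctx.W (ctx.hvec v), g⟫ := rfl
    rw [this, ctx.W_spec, ctx.J_symm]
  rw [← h3, h2]

end Hilbert

/-- If `Σ_v V(μ, h_v)² γ_v² < ∞` then for every `t ∈ [0,1]`,
`|(W_λ μ)(t)| ≤ λ C_h (Σ_v V(μ,h_v)² γ_v²)^{1/2} (Σ_v (1+λγ_v)^{-2})^{1/2}`; in particular
there is a constant `C`, depending only on `m`, `c₀` and `C_h`, such that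
`sup_t |(W_λ μ)(t)| ≤ C h^{2m−1/2} (Σ_v V(μ,h_v)² γ_v²)^{1/2}`. -/
theorem W_mu_pointwise_bound (m c₀ Ch : ℝ) (hm : 1/2 < m) (hc₀ : 0 < c₀) :
    ∃ C : ℝ, 0 < C ∧
      ∀ (lam : ℝ), 0 < lam →
        ∀ (H : Type) [NormedAddCommGroup H] [InnerProductSpace ℝ H]
          (ctx : RKHSContext lam H),
          ctx.Ch = Ch →
          (∀ v : ℕ, c₀ * ((v : ℝ) + 1) ^ (2 * m) ≤ ctx.γ v) →
          ∀ mu : H,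
            Summable (fun v : ℕ => (ctx.V mu (ctx.hvec v))^2 * (ctx.γ v)^2) →
            ∀ t ∈ Set.Icc (0:ℝ) 1,
              |ctx.ev (ctx.W mu) t| ≤
                  lam * Ch * Real.sqrt (∑' v : ℕ, (ctx.V mu (ctx.hvec v))^2 * (ctx.γ v)^2)
                    * Real.sqrt (∑' v : ℕ, ((1 + lam * ctx.γ v)^2)⁻¹) ∧
              |ctx.ev (ctx.W mu) t| ≤
                  C * (lam ^ (1/(2*m))) ^ (2*m - 1/2 : ℝ)
                    * Real.sqrt (∑' v : ℕ, (ctx.V mu (ctx.hvec v))^2 * (ctx.γ v)^2) := by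
  refine ⟨(|Ch| + 1) * Real.sqrt (2 + 2 * (c₀^2)⁻¹), by positivity, ?_⟩
  intro lam hlam H _ _ ctx hCtxCh hγlow mu hsumm t ht
  set p : ℝ := 2*m with hpdef
  have hp1 : 1 < p := by rw [hpdef]; linarith
  have hp0 : p ≠ 0 := by linarith
  set hl : ℝ := lam ^ (1/p) with hhl
  have hl0 : 0 < hl := Real.rpow_pos_of_pos hlam _
  have hlp : hl ^ p = lam := by
    rw [hhl, ← Real.rpow_mul hlam.le, one_div, inv_mul_cancel₀ hp0, Real.rpow_one]
  have hlq : hl ^ (2*p) = lam^2 := by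
    rw [hhl, ← Real.rpow_mul hlam.le, show (1/p)*(2*p) = (2:ℝ) by field_simp,
      show (2:ℝ) = ((2:ℕ):ℝ) by norm_num, Real.rpow_natCast]
  have hγ : ∀ v, 0 < ctx.γ v := ctx.γ_pos
  have hP : ∀ v, 0 < 1 + lam * ctx.γ v := fun v => by nlinarith [hγ v]
  have hCh0 : 0 ≤ Ch := by
    rw [← hCtxCh]
    exact le_trans (abs_nonneg _) (ctx.hvec_bound 0 t ht)
  have hebound : ∀ v, |ctx.ev (ctx.hvec v) t| ≤ Ch := fun v => by
    rw [← hCtxCh]; exact ctx.hvec_bound v t ht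
  set a : ℕ → ℝ := fun v => ctx.V mu (ctx.hvec v) with ha
  set b : ℕ → ℝ := fun v => ctx.V (ctx.W mu) (ctx.hvec v) with hb
  have hbP : ∀ v, b v * (1 + lam * ctx.γ v) = lam * ctx.γ v * a v := by
    intro v
    have h1 : ⟪ctx.W mu, ctx.hvec v⟫ = b v * (1 + lam * ctx.γ v) := coeff_eq ctx (ctx.W mu) v
    have h2 : ⟪ctx.W mu, ctx.hvec v⟫ = lam * ctx.J mu (ctx.hvec v) := ctx.W_spec mu (ctx.hvec v)
    have h3 := lamJ_eq ctx mu v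
    rw [h1] at h2
    rw [h2, h3, ha]
  have hbform : ∀ v, b v = (lam * ctx.γ v * a v) / (1 + lam * ctx.γ v) := fun v =>
    eq_div_of_mul_eq (hP v).ne' (hbP v)
  have hevsum : HasSum (fun v => b v * ctx.ev (ctx.hvec v) t) (ctx.ev (ctx.W mu) t) := by
    have h1 := (ctx.expansion (ctx.W mu)).mapL (innerSL ℝ (ctx.K t))
    have key : ∀ v, (innerSL ℝ (ctx.K t)) (ctx.V (ctx.W mu) (ctx.hvec v) • ctx.hvec v)
        = b v * ctx.ev (ctx.hvec v) t := by
      intro v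
      have h2 : (innerSL ℝ (ctx.K t)) (ctx.V (ctx.W mu) (ctx.hvec v) • ctx.hvec v)
          = ctx.V (ctx.W mu) (ctx.hvec v) * ⟪ctx.K t, ctx.hvec v⟫ := real_inner_smul_right _ _ _
      rw [h2, ctx.reproducing t ht, hb]
    simp only [key] at h1
    have h3 : (innerSL ℝ (ctx.K t)) (ctx.W mu) = ctx.ev (ctx.W mu) t :=
      ctx.reproducing t ht (ctx.W mu)
    rwa [h3] at h1
  set x : ℕ → ℝ := fun v => |a v| * ctx.γ v with hx
  set y : ℕ → ℝ := fun v => (1 + lam * ctx.γ v)⁻¹ with hy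
  have hx0 : ∀ v, 0 ≤ x v := fun v => mul_nonneg (abs_nonneg _) (hγ v).le
  have hy0 : ∀ v, 0 ≤ y v := fun v => (inv_pos.2 (hP v)).le
  have hx2 : (fun v => x v ^ 2) = fun v => a v ^ 2 * ctx.γ v ^ 2 := by
    funext v
    rw [hx]
    simp [mul_pow, sq_abs]
  have hy2 : (fun v => y v ^ 2) = fun v => ((1 + lam * ctx.γ v)^2)⁻¹ := by
    funext v
    rw [hy]
    simp [inv_pow]
  -- the series ∑ (1+λγ)⁻²
  set g : ℕ → ℝ := fun v => ((1 + lam * ctx.γ v)^2)⁻¹ with hgdef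
  have hg0 : ∀ v, 0 ≤ g v := fun v => by
    have := hP v
    rw [hgdef]
    positivity
  have hg1 : ∀ v, g v ≤ 1 := by
    intro v
    rw [hgdef]
    have h1 : (1:ℝ) ≤ (1 + lam * ctx.γ v)^2 := by nlinarith [hγ v, hlam, mul_pos hlam (hγ v)]
    simpa using inv_le_one_of_one_le₀ h1
  have hg2 : ∀ v, g v ≤ (c₀^2)⁻¹ * (hl ^ (2*p) * ((v:ℝ)+1) ^ (2*p))⁻¹ := by
    intro v
    have hv0 : (0:ℝ) ≤ (v:ℝ) := Nat.cast_nonneg v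
    have hXp : 0 < ((v:ℝ)+1) ^ p := Real.rpow_pos_of_pos (by linarith) p
    have hXlow : 0 < lam * (c₀ * ((v:ℝ)+1)^p) := by positivity
    have hlow : lam * (c₀ * ((v:ℝ)+1)^p) ≤ 1 + lam * ctx.γ v := by
      have := mul_le_mul_of_nonneg_left (hγlow v) hlam.le
      linarith
    have eX : ((v:ℝ)+1)^(2*p) = (((v:ℝ)+1)^p)^2 := by
      rw [← Real.rpow_natCast (((v:ℝ)+1)^p) 2, ← Real.rpow_mul (by linarith)]
      norm_num
      ring_nf
    have e : (lam * (c₀ * ((v:ℝ)+1)^p))^2 = c₀^2 * (hl ^ (2*p) * ((v:ℝ)+1)^(2*p)) := by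
      rw [hlq, eX]; ring
    have hsq : (lam * (c₀ * ((v:ℝ)+1)^p))^2 ≤ (1 + lam * ctx.γ v)^2 := by
      apply pow_le_pow_left₀ hXlow.le hlow
    rw [hgdef]
    calc ((1 + lam * ctx.γ v)^2)⁻¹ ≤ ((lam * (c₀ * ((v:ℝ)+1)^p))^2)⁻¹ :=
          inv_anti₀ (by positivity) hsq
      _ = (c₀^2 * (hl ^ (2*p) * ((v:ℝ)+1)^(2*p)))⁻¹ := by rw [e]
      _ = (c₀^2)⁻¹ * (hl ^ (2*p) * ((v:ℝ)+1) ^ (2*p))⁻¹ := by rw [mul_inv]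
  obtain ⟨hgsum, hgbound⟩ :=
    aux_series (2*p) ((c₀^2)⁻¹) hl (by linarith) (by positivity) hl0 g hg0 hg1 hg2
  have hysum : Summable (fun v => y v ^ 2) := by rw [hy2]; exact hgsum
  have hxsum : Summable (fun v => x v ^ 2) := by rw [hx2]; exact hsumm
  obtain ⟨hxysum, hxybound⟩ := aux_CS x y hx0 hy0 hxsum hysum
  have hbabs : ∀ v, |b v| = lam * (x v * y v) := by
    intro v
    rw [hbform v, abs_div, abs_of_pos (hP v), abs_mul, abs_mul, abs_of_pos hlam,
      abs_of_pos (hγ v), hx, hy, div_eq_mul_inv]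
    ring
  have hpt : ∀ v, |b v * ctx.ev (ctx.hvec v) t| ≤ (lam * Ch) * (x v * y v) := by
    intro v
    rw [abs_mul, hbabs v]
    have hnn : 0 ≤ lam * (x v * y v) :=
      mul_nonneg hlam.le (mul_nonneg (hx0 v) (hy0 v))
    calc lam * (x v * y v) * |ctx.ev (ctx.hvec v) t| ≤ lam * (x v * y v) * Ch :=
          mul_le_mul_of_nonneg_left (hebound v) hnn
      _ = (lam * Ch) * (x v * y v) := by ring
  have habs_sum : Summable (fun v => |b v * ctx.ev (ctx.hvec v) t|) :=
    Summable.of_nonneg_of_le (fun v => abs_nonneg _) hpt (hxysum.mul_left (lam*Ch))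
  have hev_eq : ctx.ev (ctx.W mu) t = ∑' v, b v * ctx.ev (ctx.hvec v) t := hevsum.tsum_eq.symm
  have first : |ctx.ev (ctx.W mu) t| ≤
      lam * Ch * Real.sqrt (∑' v, a v ^ 2 * ctx.γ v ^ 2) * Real.sqrt (∑' v, g v) := by
    rw [hev_eq]
    calc |∑' v, b v * ctx.ev (ctx.hvec v) t| ≤ ∑' v, |b v * ctx.ev (ctx.hvec v) t| := by
          have hns : Summable (fun v => ‖b v * ctx.ev (ctx.hvec v) t‖) := by
            simpa only [Real.norm_eq_abs] using habs_sum
          simpa only [Real.norm_eq_abs] using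
            norm_tsum_le_tsum_norm (f := fun v => b v * ctx.ev (ctx.hvec v) t) hns
      _ ≤ ∑' v, (lam * Ch) * (x v * y v) := Summable.tsum_le_tsum hpt habs_sum (hxysum.mul_left _)
      _ = (lam * Ch) * ∑' v, x v * y v := tsum_mul_left
      _ ≤ (lam * Ch) * (Real.sqrt (∑' v, x v ^ 2) * Real.sqrt (∑' v, y v ^ 2)) :=
          mul_le_mul_of_nonneg_left hxybound (mul_nonneg hlam.le hCh0)
      _ = lam * Ch * Real.sqrt (∑' v, a v ^ 2 * ctx.γ v ^ 2) * Real.sqrt (∑' v, g v) := by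
          rw [hx2, hy2]
          ring
  refine ⟨first, ?_⟩
  -- second bound
  have hA0 : 0 ≤ Real.sqrt (∑' v, a v ^ 2 * ctx.γ v ^ 2) := Real.sqrt_nonneg _
  have hsqrtS : Real.sqrt (∑' v, g v) ≤
      Real.sqrt (2 + 2 * (c₀^2)⁻¹) * (Real.sqrt hl)⁻¹ := by
    calc Real.sqrt (∑' v, g v) ≤ Real.sqrt ((2 + 2 * (c₀^2)⁻¹) / hl) :=
          Real.sqrt_le_sqrt hgbound
      _ = Real.sqrt (2 + 2 * (c₀^2)⁻¹) / Real.sqrt hl := by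
          rw [Real.sqrt_div (by positivity)]
      _ = Real.sqrt (2 + 2 * (c₀^2)⁻¹) * (Real.sqrt hl)⁻¹ := by rw [div_eq_mul_inv]
  have key2 : lam * (Real.sqrt hl)⁻¹ = hl ^ (p - 1/2 : ℝ) := by
    rw [← hlp, Real.sqrt_eq_rpow, ← Real.rpow_neg hl0.le, ← Real.rpow_add hl0]
    ring_nf
  have step : lam * Ch * Real.sqrt (∑' v, a v ^ 2 * ctx.γ v ^ 2) * Real.sqrt (∑' v, g v) ≤
      ((|Ch| + 1) * Real.sqrt (2 + 2 * (c₀^2)⁻¹)) * hl ^ (p - 1/2 : ℝ)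
        * Real.sqrt (∑' v, a v ^ 2 * ctx.γ v ^ 2) := by
    have hCh1 : Ch ≤ |Ch| + 1 := by
      have := le_abs_self Ch
      linarith
    have h1 : lam * Ch * Real.sqrt (∑' v, a v ^ 2 * ctx.γ v ^ 2) * Real.sqrt (∑' v, g v) ≤
        lam * (|Ch| + 1) * Real.sqrt (∑' v, a v ^ 2 * ctx.γ v ^ 2) *
          (Real.sqrt (2 + 2 * (c₀^2)⁻¹) * (Real.sqrt hl)⁻¹) := by
      have hq2 : 0 ≤ (Real.sqrt (2 + 2 * (c₀^2)⁻¹)) * (Real.sqrt hl)⁻¹ := by positivity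
      have s1 : lam * Ch * Real.sqrt (∑' v, a v ^ 2 * ctx.γ v ^ 2) * Real.sqrt (∑' v, g v) ≤
          lam * Ch * Real.sqrt (∑' v, a v ^ 2 * ctx.γ v ^ 2) *
            (Real.sqrt (2 + 2 * (c₀^2)⁻¹) * (Real.sqrt hl)⁻¹) :=
        mul_le_mul_of_nonneg_left hsqrtS
          (mul_nonneg (mul_nonneg hlam.le hCh0) hA0)
      have s2 : lam * Ch * Real.sqrt (∑' v, a v ^ 2 * ctx.γ v ^ 2) ≤
          lam * (|Ch| + 1) * Real.sqrt (∑' v, a v ^ 2 * ctx.γ v ^ 2) := by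
        have := mul_nonneg hlam.le hA0
        nlinarith
      have s3 := mul_le_mul_of_nonneg_right s2 hq2
      linarith
    calc lam * Ch * Real.sqrt (∑' v, a v ^ 2 * ctx.γ v ^ 2) * Real.sqrt (∑' v, g v)
        ≤ lam * (|Ch| + 1) * Real.sqrt (∑' v, a v ^ 2 * ctx.γ v ^ 2) *
          (Real.sqrt (2 + 2 * (c₀^2)⁻¹) * (Real.sqrt hl)⁻¹) := h1
      _ = ((|Ch| + 1) * Real.sqrt (2 + 2 * (c₀^2)⁻¹)) * (lam * (Real.sqrt hl)⁻¹)
            * Real.sqrt (∑' v, a v ^ 2 * ctx.γ v ^ 2) := by ring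
      _ = ((|Ch| + 1) * Real.sqrt (2 + 2 * (c₀^2)⁻¹)) * hl ^ (p - 1/2 : ℝ)
            * Real.sqrt (∑' v, a v ^ 2 * ctx.γ v ^ 2) := by rw [key2]
  have goal2 : |ctx.ev (ctx.W mu) t| ≤
      ((|Ch| + 1) * Real.sqrt (2 + 2 * (c₀^2)⁻¹)) * hl ^ (p - 1/2 : ℝ)
        * Real.sqrt (∑' v, a v ^ 2 * ctx.γ v ^ 2) := le_trans first step
  exact goal2
end
end
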